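/- arXiv:0903.3704 — 5 statements merged into one kernel-verified Lean document; each statement's English description precedes it below -/
import Mathlib

section
/- Let τ be a recurrent renewal process on ℕ with inter-arrival law K and let Z_N(β,h) = E[ exp( (h+β²/2)·∑_{n=1}^N δ_n + β² ∑_{1≤i<j≤N} ρ_{j−i} δ_i δ_j )·δ_N ], where δ_n = 1_{n∈τ} and ρ has finite range q. Then there exists a constant C depending only on ρ and q such that Z_{N+M}(β,h) ≥ e^{Cβ²} Z_N(β,h) Z_M(β,h) for all N, M ≥ 1. -/
open scoped Classical
open MeasureTheory ProbabilityTheory Filter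

/-- `renewalδ T n x = 1` iff `n` is a renewal point of the trajectory `x`
(i.e. a partial sum of the inter-arrival times `T`). -/
noncomputable def renewalδ {Ω : Type*} (T : ℕ → Ω → ℕ) (n : ℕ) (x : Ω) : ℝ :=
  if ∃ m : ℕ, ∑ k ∈ Finset.range m, T k x = n then 1 else 0

/-- The constrained annealed partition function of the pinning model with
correlation function `ρ`. -/
noncomputable def Zfun {Ω : Type*} [MeasurableSpace Ω] (P : Measure Ω)
    (T : ℕ → Ω → ℕ) (ρ : ℕ → ℝ) (β h : ℝ) (N : ℕ) : ℝ :=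
  ∫ x, Real.exp ((h + β ^ 2 / 2) * ∑ n ∈ Finset.Icc 1 N, renewalδ T n x
      + β ^ 2 * ∑ i ∈ Finset.Icc 1 N, ∑ j ∈ Finset.Icc (i + 1) N,
          ρ (j - i) * renewalδ T i x * renewalδ T j x) * renewalδ T N x ∂P

namespace PinAux

noncomputable def sS (u : ℕ → ℕ) (r : ℕ) : ℕ := ∑ k ∈ Finset.range r, u k

noncomputable def rδ (u : ℕ → ℕ) (n : ℕ) : ℝ := if ∃ m, sS u m = n then 1 else 0

noncomputable def dF (u : ℕ → ℕ) (c n : ℕ) : ℝ :=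
  if ∃ r ∈ Finset.range c, sS u r = n then 1 else 0

noncomputable def Ham (ρ : ℕ → ℝ) (β h : ℝ) (N : ℕ) (d : ℕ → ℝ) : ℝ :=
  (h + β ^ 2 / 2) * ∑ n ∈ Finset.Icc 1 N, d n
    + β ^ 2 * ∑ i ∈ Finset.Icc 1 N, ∑ j ∈ Finset.Icc (i + 1) N, ρ (j - i) * d i * d j

lemma renewalδ_eq {Ω : Type*} (T : ℕ → Ω → ℕ) (n : ℕ) (x : Ω) :
    renewalδ T n x = rδ (fun k => T k x) n := rfl

lemma Zfun_eq {Ω : Type*} [MeasurableSpace Ω] (P : Measure Ω) (T : ℕ → Ω → ℕ)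
    (ρ : ℕ → ℝ) (β h : ℝ) (N : ℕ) :
    Zfun P T ρ β h N
      = ∫ x, Real.exp (Ham ρ β h N (fun n => rδ (fun k => T k x) n))
          * rδ (fun k => T k x) N ∂P := rfl

lemma rδ_nonneg (u : ℕ → ℕ) (n : ℕ) : 0 ≤ rδ u n := by
  unfold rδ; split <;> norm_num

lemma rδ_le_one (u : ℕ → ℕ) (n : ℕ) : rδ u n ≤ 1 := by
  unfold rδ; split <;> norm_num

lemma dF_nonneg (u : ℕ → ℕ) (c n : ℕ) : 0 ≤ dF u c n := by
  unfold dF; split <;> norm_num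

lemma dF_le_one (u : ℕ → ℕ) (c n : ℕ) : dF u c n ≤ 1 := by
  unfold dF; split <;> norm_num

lemma sS_congr {u v : ℕ → ℕ} (r : ℕ) (h : ∀ k, k < r → u k = v k) : sS u r = sS v r :=
  Finset.sum_congr rfl fun k hk => h k (Finset.mem_range.mp hk)

lemma dF_congr {u v : ℕ → ℕ} (c n : ℕ) (h : ∀ k, k + 1 < c → u k = v k) :
    dF u c n = dF v c n := by
  unfold dF
  congr 1
  apply propext
  constructor <;> rintro ⟨r, hr, hs⟩ <;> refine ⟨r, hr, ?_⟩ <;>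
    have he : sS u r = sS v r :=
      sS_congr r fun k hk => h k (by have := Finset.mem_range.mp hr; omega)
  · omega
  · omega

lemma sS_strictMono {u : ℕ → ℕ} (hu : ∀ k, 1 ≤ u k) : StrictMono (sS u) := by
  apply strictMono_nat_of_lt_succ
  intro r
  have : sS u (r + 1) = sS u r + u r := Finset.sum_range_succ u r
  have := hu r
  omega

lemma le_sS {u : ℕ → ℕ} (hu : ∀ k, 1 ≤ u k) (r : ℕ) : r ≤ sS u r :=
  (sS_strictMono hu).le_apply

lemma sS_add (u : ℕ → ℕ) (m s : ℕ) :
    sS u (m + s) = sS u m + sS (fun k => u (m + k)) s :=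
  Finset.sum_range_add u m s

/-- regeneration identity -/
lemma rδ_shift {u : ℕ → ℕ} (hu : ∀ k, 1 ≤ u k) {m N : ℕ} (hm : sS u m = N) (j : ℕ) :
    rδ u (N + j) = rδ (fun k => u (m + k)) j := by
  unfold rδ
  congr 1
  apply propext
  constructor
  · rintro ⟨r, hr⟩
    have hmr : m ≤ r := by
      by_contra hc
      have := (sS_strictMono hu) (show r < m by omega)
      omega
    refine ⟨r - m, ?_⟩
    have : sS u (m + (r - m)) = sS u m + sS (fun k => u (m + k)) (r - m) := sS_add u m _
    rw [show m + (r - m) = r by omega] at this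
    omega
  · rintro ⟨s, hs⟩
    exact ⟨m + s, by rw [sS_add u m s, hm, hs]⟩

lemma rδ_eq_dF {u : ℕ → ℕ} (hu : ∀ k, 1 ≤ u k) {c n : ℕ} (hn : n < c) :
    rδ u n = dF u c n := by
  unfold rδ dF
  congr 1
  apply propext
  constructor
  · rintro ⟨r, hr⟩
    exact ⟨r, Finset.mem_range.mpr (by have := le_sS hu r; omega), hr⟩
  · rintro ⟨r, _, hr⟩; exact ⟨r, hr⟩

lemma rδ_eq_dF' {u : ℕ → ℕ} (hu : ∀ k, 1 ≤ u k) {m N : ℕ} (hm : sS u m = N)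
    {n : ℕ} (hn : n ≤ N) : rδ u n = dF u (m + 1) n := by
  unfold rδ dF
  congr 1
  apply propext
  constructor
  · rintro ⟨r, hr⟩
    refine ⟨r, Finset.mem_range.mpr ?_, hr⟩
    by_contra hc
    have := (sS_strictMono hu) (show m < r by omega)
    omega
  · rintro ⟨r, _, hr⟩; exact ⟨r, hr⟩

lemma Ham_congr (ρ : ℕ → ℝ) (β h : ℝ) (N : ℕ) {d d' : ℕ → ℝ}
    (hdd : ∀ n, 1 ≤ n → n ≤ N → d n = d' n) :
    Ham ρ β h N d = Ham ρ β h N d' := by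
  unfold Ham
  congr 1
  · congr 1
    apply Finset.sum_congr rfl
    intro n hn
    exact hdd n (Finset.mem_Icc.mp hn).1 (Finset.mem_Icc.mp hn).2
  · congr 1
    apply Finset.sum_congr rfl
    intro i hi
    apply Finset.sum_congr rfl
    intro j hj
    have hi' := Finset.mem_Icc.mp hi
    have hj' := Finset.mem_Icc.mp hj
    rw [hdd i hi'.1 hi'.2, hdd j (by omega) hj'.2]


noncomputable def hamB (ρ : ℕ → ℝ) (β h : ℝ) (N : ℕ) : ℝ :=
  |h + β ^ 2 / 2| * N
    + β ^ 2 * ∑ i ∈ Finset.Icc 1 N, ∑ j ∈ Finset.Icc (i + 1) N, |ρ (j - i)|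

lemma Ham_le (ρ : ℕ → ℝ) (β h : ℝ) (N : ℕ) {d : ℕ → ℝ}
    (hd0 : ∀ n, 0 ≤ d n) (hd1 : ∀ n, d n ≤ 1) :
    Ham ρ β h N d ≤ hamB ρ β h N := by
  unfold Ham hamB
  gcongr ?_ + ?_
  · calc (h + β ^ 2 / 2) * ∑ n ∈ Finset.Icc 1 N, d n
        ≤ |h + β ^ 2 / 2| * ∑ n ∈ Finset.Icc 1 N, d n := by
          apply mul_le_mul_of_nonneg_right (le_abs_self _)
          exact Finset.sum_nonneg fun n _ => hd0 n
      _ ≤ |h + β ^ 2 / 2| * N := by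
          apply mul_le_mul_of_nonneg_left _ (abs_nonneg _)
          calc ∑ n ∈ Finset.Icc 1 N, d n ≤ ∑ n ∈ Finset.Icc 1 N, (1:ℝ) :=
                Finset.sum_le_sum fun n _ => hd1 n
            _ = N := by simp
  · apply mul_le_mul_of_nonneg_left _ (sq_nonneg β)
    apply Finset.sum_le_sum
    intro i _
    apply Finset.sum_le_sum
    intro j _
    calc ρ (j - i) * d i * d j ≤ |ρ (j - i) * d i * d j| := le_abs_self _
      _ = |ρ (j - i)| * (d i * d j) := by
          rw [abs_mul, abs_mul, abs_of_nonneg (hd0 i), abs_of_nonneg (hd0 j), mul_assoc]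
      _ ≤ |ρ (j - i)| * 1 := by
          apply mul_le_mul_of_nonneg_left _ (abs_nonneg _)
          exact mul_le_one₀ (hd1 i) (hd0 j) (hd1 j)
      _ = |ρ (j - i)| := mul_one _

lemma crossBound (q : ℕ) (ρ : ℕ → ℝ) (hρ : ∀ k, q < k → ρ k = 0) (N M : ℕ)
    {d : ℕ → ℝ} (hd0 : ∀ n, 0 ≤ d n) (hd1 : ∀ n, d n ≤ 1) :
    -((q : ℝ) * ∑ k ∈ Finset.Icc 1 q, |ρ k|)
      ≤ ∑ i ∈ Finset.Ioc 0 N, ∑ j ∈ Finset.Ioc N (N + M), ρ (j - i) * d i * d j := by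
  set R : ℝ := ∑ k ∈ Finset.Icc 1 q, |ρ k| with hR
  have hR0 : 0 ≤ R := Finset.sum_nonneg fun k _ => abs_nonneg _
  set e : ℕ → ℝ := fun i => if N < i + q then 1 else 0 with he
  have step1 : ∀ i ∈ Finset.Ioc 0 N,
      -(e i * R) ≤ ∑ j ∈ Finset.Ioc N (N + M), ρ (j - i) * d i * d j := by
    intro i hi
    have hi' := Finset.mem_Ioc.mp hi
    by_cases hc : N < i + q
    · have he1 : e i = 1 := if_pos hc
      rw [he1, one_mul]
      have hterm : ∀ j ∈ Finset.Ioc N (N + M),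
          -|ρ (j - i)| ≤ ρ (j - i) * d i * d j := by
        intro j hj
        have h1 : ρ (j - i) * d i * d j ≥ -(|ρ (j - i)| * (d i * d j)) := by
          rw [mul_assoc]
          have : -(|ρ (j - i)|) * (d i * d j) ≤ ρ (j - i) * (d i * d j) :=
            mul_le_mul_of_nonneg_right (neg_abs_le _) (mul_nonneg (hd0 i) (hd0 j))
          linarith
        have h2 : |ρ (j - i)| * (d i * d j) ≤ |ρ (j - i)| * 1 :=
          mul_le_mul_of_nonneg_left (mul_le_one₀ (hd1 i) (hd0 j) (hd1 j)) (abs_nonneg _)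
        linarith
      have hsum : -(∑ j ∈ Finset.Ioc N (N + M), |ρ (j - i)|)
          ≤ ∑ j ∈ Finset.Ioc N (N + M), ρ (j - i) * d i * d j := by
        rw [← Finset.sum_neg_distrib]
        exact Finset.sum_le_sum hterm
      have himg : ∑ j ∈ Finset.Ioc N (N + M), |ρ (j - i)|
          = ∑ k ∈ (Finset.Ioc N (N + M)).image (fun j => j - i), |ρ k| := by
        rw [Finset.sum_image]
        intro a ha b hb hab
        have ha' := Finset.mem_Ioc.mp ha
        have hb' := Finset.mem_Ioc.mp hb
        dsimp only at hab
        omega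
      have hle : ∑ k ∈ (Finset.Ioc N (N + M)).image (fun j => j - i), |ρ k| ≤ R := by
        rw [hR]
        rw [← Finset.sum_filter_ne_zero]
        apply Finset.sum_le_sum_of_subset_of_nonneg
        · intro k hk
          simp only [Finset.mem_filter, Finset.mem_image, Finset.mem_Ioc] at hk
          obtain ⟨⟨j, hj, hji⟩, hk0⟩ := hk
          have hk1 : 1 ≤ k := by omega
          have hk2 : k ≤ q := by
            by_contra hc2
            exact hk0 (by rw [hρ k (by omega)]; simp)
          exact Finset.mem_Icc.mpr ⟨hk1, hk2⟩
        · intro k _ _; exact abs_nonneg _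
      linarith
    · have he0 : e i = 0 := if_neg hc
      rw [he0, zero_mul, neg_zero]
      apply Finset.sum_nonneg
      intro j hj
      have hj' := Finset.mem_Ioc.mp hj
      rw [hρ (j - i) (by omega), zero_mul, zero_mul]
  have step2 : ∑ i ∈ Finset.Ioc 0 N, e i ≤ (q : ℝ) := by
    rw [he]
    simp only []
    rw [Finset.sum_boole]
    have hcard : ((Finset.Ioc 0 N).filter (fun i => N < i + q)).card ≤ q := by
      have hsub : (Finset.Ioc 0 N).filter (fun i => N < i + q) ⊆ Finset.Ioc (N - q) N := by
        intro i hi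
        simp only [Finset.mem_filter, Finset.mem_Ioc] at hi ⊢
        omega
      calc ((Finset.Ioc 0 N).filter (fun i => N < i + q)).card
          ≤ (Finset.Ioc (N - q) N).card := Finset.card_le_card hsub
        _ = N - (N - q) := Nat.card_Ioc _ _
        _ ≤ q := by omega
    exact_mod_cast Nat.cast_le.mpr hcard
  calc -((q : ℝ) * R) ≤ -((∑ i ∈ Finset.Ioc 0 N, e i) * R) := by
        apply neg_le_neg
        exact mul_le_mul_of_nonneg_right step2 hR0
    _ = ∑ i ∈ Finset.Ioc 0 N, -(e i * R) := by
        rw [Finset.sum_mul, Finset.sum_neg_distrib]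
    _ ≤ _ := Finset.sum_le_sum step1


lemma Icc_one (n : ℕ) : Finset.Icc 1 n = Finset.Ioc 0 n := Finset.Icc_add_one_left_eq_Ioc 0 n

lemma Icc_succ (i n : ℕ) : Finset.Icc (i + 1) n = Finset.Ioc i n := Finset.Icc_add_one_left_eq_Ioc i n

lemma shift_sum (N b : ℕ) (f : ℕ → ℝ) :
    ∑ n ∈ Finset.Ioc N (N + b), f n = ∑ j ∈ Finset.Ioc 0 b, f (N + j) := by
  have hmap : Finset.Ioc N (N + b) = (Finset.Ioc 0 b).map (addLeftEmbedding N) := by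
    rw [Finset.map_add_left_Ioc, Nat.add_zero]
  rw [hmap, Finset.sum_map]
  rfl

lemma Ham_split (q : ℕ) (ρ : ℕ → ℝ) (hρ : ∀ k, q < k → ρ k = 0) (β h : ℝ) (N M : ℕ)
    {d : ℕ → ℝ} (hd0 : ∀ n, 0 ≤ d n) (hd1 : ∀ n, d n ≤ 1) :
    Ham ρ β h N d + Ham ρ β h M (fun j => d (N + j))
      + -((q : ℝ) * ∑ k ∈ Finset.Icc 1 q, |ρ k|) * β ^ 2
      ≤ Ham ρ β h (N + M) d := by
  have hlin : ∑ n ∈ Finset.Ioc 0 (N + M), d n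
      = ∑ n ∈ Finset.Ioc 0 N, d n + ∑ j ∈ Finset.Ioc 0 M, d (N + j) := by
    rw [← Finset.sum_Ioc_consecutive d (Nat.zero_le N) (Nat.le_add_right N M),
      shift_sum N M d]
  set cross : ℝ := ∑ i ∈ Finset.Ioc 0 N, ∑ j ∈ Finset.Ioc N (N + M),
      ρ (j - i) * d i * d j with hcross
  have hquad : ∑ i ∈ Finset.Ioc 0 (N + M), ∑ j ∈ Finset.Ioc i (N + M), ρ (j - i) * d i * d j
      = (∑ i ∈ Finset.Ioc 0 N, ∑ j ∈ Finset.Ioc i N, ρ (j - i) * d i * d j)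
        + (∑ i ∈ Finset.Ioc 0 M, ∑ j ∈ Finset.Ioc i M, ρ (j - i) * d (N + i) * d (N + j))
        + cross := by
    rw [← Finset.sum_Ioc_consecutive _ (Nat.zero_le N) (Nat.le_add_right N M)]
    have h1 : ∑ i ∈ Finset.Ioc 0 N, ∑ j ∈ Finset.Ioc i (N + M), ρ (j - i) * d i * d j
        = ∑ i ∈ Finset.Ioc 0 N, ((∑ j ∈ Finset.Ioc i N, ρ (j - i) * d i * d j)
            + ∑ j ∈ Finset.Ioc N (N + M), ρ (j - i) * d i * d j) := by
      apply Finset.sum_congr rfl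
      intro i hi
      have hiN : i ≤ N := (Finset.mem_Ioc.mp hi).2
      rw [Finset.sum_Ioc_consecutive _ hiN (Nat.le_add_right N M)]
    have h2 : ∑ i ∈ Finset.Ioc N (N + M), ∑ j ∈ Finset.Ioc i (N + M), ρ (j - i) * d i * d j
        = ∑ i ∈ Finset.Ioc 0 M, ∑ j ∈ Finset.Ioc i M, ρ (j - i) * d (N + i) * d (N + j) := by
      rw [shift_sum N M (fun i => ∑ j ∈ Finset.Ioc i (N + M), ρ (j - i) * d i * d j)]
      apply Finset.sum_congr rfl
      intro i hi
      have hiM : i ≤ M := (Finset.mem_Ioc.mp hi).2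
      have e1 : Finset.Ioc (N + i) (N + M) = Finset.Ioc (N + i) (N + i + (M - i)) := by
        congr 1; omega
      have e2 : Finset.Ioc i M = Finset.Ioc i (i + (M - i)) := by congr 1; omega
      rw [e1, e2, shift_sum (N + i) (M - i) (fun j => ρ (j - (N + i)) * d (N + i) * d j),
        shift_sum i (M - i) (fun j => ρ (j - i) * d (N + i) * d (N + j))]
      apply Finset.sum_congr rfl
      intro j hj
      rw [Nat.add_sub_cancel_left, Nat.add_sub_cancel_left, Nat.add_assoc]
    rw [h1, Finset.sum_add_distrib, h2]
    ring
  have hcb : -((q : ℝ) * ∑ k ∈ Finset.Icc 1 q, |ρ k|) ≤ cross :=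
    crossBound q ρ hρ N M hd0 hd1
  have hcb2 : β ^ 2 * -((q : ℝ) * ∑ k ∈ Finset.Icc 1 q, |ρ k|) ≤ β ^ 2 * cross :=
    mul_le_mul_of_nonneg_left hcb (sq_nonneg β)
  have key : Ham ρ β h (N + M) d
      = Ham ρ β h N d + Ham ρ β h M (fun j => d (N + j)) + β ^ 2 * cross := by
    simp only [Ham, Icc_one, Icc_succ]
    rw [hlin, hquad]
    ring
  rw [key]
  linarith

section Meas

variable {Ω : Type*} [MeasurableSpace Ω] {T : ℕ → Ω → ℕ}

lemma measurable_sSc (hmeas : ∀ i, Measurable (T i)) (r : ℕ) :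
    Measurable fun x => sS (fun k => T k x) r := by
  unfold sS
  exact Finset.measurable_sum _ fun k _ => hmeas k

lemma measurable_rδc (hmeas : ∀ i, Measurable (T i)) (n : ℕ) :
    Measurable fun x => rδ (fun k => T k x) n := by
  unfold rδ
  apply Measurable.ite _ measurable_const measurable_const
  have : {x | ∃ m, sS (fun k => T k x) m = n}
      = ⋃ m, (fun x => sS (fun k => T k x) m) ⁻¹' {n} := by
    ext x; simp
  rw [this]
  exact MeasurableSet.iUnion fun m => (measurable_sSc hmeas m) (measurableSet_singleton n)

lemma measurable_IZ (hmeas : ∀ i, Measurable (T i)) (ρ : ℕ → ℝ) (β h : ℝ) (n : ℕ) :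
    Measurable fun x => Real.exp (Ham ρ β h n (fun k => rδ (fun k' => T k' x) k))
      * rδ (fun k' => T k' x) n := by
  apply Measurable.mul _ (measurable_rδc hmeas n)
  apply Real.measurable_exp.comp
  unfold Ham
  apply Measurable.add
  · exact (Finset.measurable_sum _ fun k _ => measurable_rδc hmeas k).const_mul _
  · apply Measurable.const_mul
    apply Finset.measurable_sum; intro i _
    apply Finset.measurable_sum; intro j _
    exact ((measurable_rδc hmeas i).const_mul _).mul (measurable_rδc hmeas j)

end Meas

lemma law_eq {Ω : Type*} [MeasurableSpace Ω] (P : Measure Ω) [IsProbabilityMeasure P]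
    (T : ℕ → Ω → ℕ) (hmeas : ∀ i, Measurable (T i))
    (hindep : iIndepFun T P)
    (hident : ∀ i, Measure.map (T i) P = Measure.map (T 0) P)
    (M m : ℕ) :
    Measure.map (fun x (i : Fin M) => T (m + i) x) P
      = Measure.map (fun x (i : Fin M) => T i x) P := by
  have hsingle : ∀ (k a : ℕ), P (T k ⁻¹' {a}) = P (T 0 ⁻¹' {a}) := by
    intro k a
    rw [← Measure.map_apply (hmeas k) (measurableSet_singleton a), hident k,
      Measure.map_apply (hmeas 0) (measurableSet_singleton a)]
  have hkey : ∀ (m' : ℕ) (g : Fin M → ℕ),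
      P ((fun x (i : Fin M) => T (m' + i) x) ⁻¹' {g}) = ∏ i : Fin M, P (T 0 ⁻¹' {g i}) := by
    intro m' g
    set S : Finset ℕ := Finset.image (fun i : Fin M => m' + (i : ℕ)) Finset.univ with hS
    set sets : ℕ → Set ℕ :=
      fun n => if hn : m' ≤ n ∧ n - m' < M then {g ⟨n - m', hn.2⟩} else Set.univ with hsets_def
    have hsets : ∀ i : Fin M, sets (m' + (i : ℕ)) = {g i} := by
      intro i
      have h1 : m' ≤ m' + (i : ℕ) ∧ m' + (i : ℕ) - m' < M := ⟨Nat.le_add_right _ _, by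
        have := i.isLt; omega⟩
      rw [hsets_def]
      simp only []
      rw [dif_pos h1]
      have h2 : (⟨m' + (i : ℕ) - m', h1.2⟩ : Fin M) = i := Fin.ext (by simp)
      rw [h2]
    have hpre : (fun x (i : Fin M) => T (m' + i) x) ⁻¹' {g} = ⋂ n ∈ S, T n ⁻¹' sets n := by
      ext x
      simp only [Set.mem_preimage, Set.mem_singleton_iff, funext_iff, Set.mem_iInter,
        Finset.mem_image, Finset.mem_univ, true_and, hS]
      constructor
      · rintro hx n ⟨i, rfl⟩
        rw [hsets i]
        exact Set.mem_singleton_iff.2 (hx i)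
      · intro hx i
        have := hx (m' + (i : ℕ)) ⟨i, rfl⟩
        rwa [hsets i, Set.mem_singleton_iff] at this
    have hmul := hindep.measure_inter_preimage_eq_mul S (sets := sets)
      (fun n _ => MeasurableSet.of_discrete)
    rw [hpre, hmul]
    rw [hS, Finset.prod_image (by
      intro i _ j _ hij
      exact Fin.ext (by dsimp only at hij; omega))]
    apply Finset.prod_congr rfl
    intro i _
    rw [hsets i, hsingle]
  have hVm : Measurable fun x (i : Fin M) => T (m + i) x :=
    measurable_pi_lambda _ fun i => hmeas _
  have hV0 : Measurable fun x (i : Fin M) => T i x :=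
    measurable_pi_lambda _ fun i => hmeas _
  apply Measure.ext_of_singleton
  intro g
  rw [Measure.map_apply hVm (measurableSet_singleton g),
    Measure.map_apply hV0 (measurableSet_singleton g), hkey m g]
  have h0 : (fun x (i : Fin M) => T i x) = fun x (i : Fin M) => T (0 + i) x := by
    simp
  rw [h0, hkey 0 g]

noncomputable def Fφ (ρ : ℕ → ℝ) (β h : ℝ) (N m : ℕ) (u : ℕ → ℕ) : ℝ :=
  (if sS u m = N then (1:ℝ) else 0) * Real.exp (Ham ρ β h N (fun n => dF u (m + 1) n))

noncomputable def Gψ (ρ : ℕ → ℝ) (β h : ℝ) (M : ℕ) (u : ℕ → ℕ) : ℝ :=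
  Real.exp (Ham ρ β h M (fun n => dF u (M + 1) n)) * dF u (M + 1) M

lemma Fφ_congr (ρ : ℕ → ℝ) (β h : ℝ) (N m : ℕ) {u v : ℕ → ℕ}
    (hag : ∀ k, k < m → u k = v k) : Fφ ρ β h N m u = Fφ ρ β h N m v := by
  unfold Fφ
  have h1 : sS u m = sS v m := sS_congr m hag
  have h2 : (fun n => dF u (m + 1) n) = fun n => dF v (m + 1) n :=
    funext fun n => dF_congr _ _ fun k hk => hag k (by omega)
  rw [h1, h2]

lemma Gψ_congr (ρ : ℕ → ℝ) (β h : ℝ) (M : ℕ) {u v : ℕ → ℕ}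
    (hag : ∀ k, k < M → u k = v k) : Gψ ρ β h M u = Gψ ρ β h M v := by
  unfold Gψ
  have h2 : (fun n => dF u (M + 1) n) = fun n => dF v (M + 1) n :=
    funext fun n => dF_congr _ _ fun k hk => hag k (by omega)
  rw [h2, dF_congr (M + 1) M fun k hk => hag k (by omega)]

lemma Fφ_nonneg (ρ : ℕ → ℝ) (β h : ℝ) (N m : ℕ) (u : ℕ → ℕ) : 0 ≤ Fφ ρ β h N m u := by
  unfold Fφ
  apply mul_nonneg _ (Real.exp_pos _).le
  split <;> norm_num

lemma Fφ_le (ρ : ℕ → ℝ) (β h : ℝ) (N m : ℕ) (u : ℕ → ℕ) :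
    Fφ ρ β h N m u ≤ Real.exp (hamB ρ β h N) := by
  unfold Fφ
  calc (if sS u m = N then (1:ℝ) else 0) * Real.exp (Ham ρ β h N (fun n => dF u (m + 1) n))
      ≤ 1 * Real.exp (Ham ρ β h N (fun n => dF u (m + 1) n)) := by
        apply mul_le_mul_of_nonneg_right _ (Real.exp_pos _).le
        split <;> norm_num
    _ = Real.exp (Ham ρ β h N (fun n => dF u (m + 1) n)) := one_mul _
    _ ≤ Real.exp (hamB ρ β h N) :=
        Real.exp_le_exp.2 (Ham_le ρ β h N (fun n => dF_nonneg u _ n) (fun n => dF_le_one u _ n))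

lemma Gψ_nonneg (ρ : ℕ → ℝ) (β h : ℝ) (M : ℕ) (u : ℕ → ℕ) : 0 ≤ Gψ ρ β h M u :=
  mul_nonneg (Real.exp_pos _).le (dF_nonneg u _ M)

lemma Gψ_le (ρ : ℕ → ℝ) (β h : ℝ) (M : ℕ) (u : ℕ → ℕ) :
    Gψ ρ β h M u ≤ Real.exp (hamB ρ β h M) := by
  unfold Gψ
  calc Real.exp (Ham ρ β h M (fun n => dF u (M + 1) n)) * dF u (M + 1) M
      ≤ Real.exp (Ham ρ β h M (fun n => dF u (M + 1) n)) * 1 :=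
        mul_le_mul_of_nonneg_left (dF_le_one u _ M) (Real.exp_pos _).le
    _ = Real.exp (Ham ρ β h M (fun n => dF u (M + 1) n)) := mul_one _
    _ ≤ Real.exp (hamB ρ β h M) :=
        Real.exp_le_exp.2 (Ham_le ρ β h M (fun n => dF_nonneg u _ n) (fun n => dF_le_one u _ n))

lemma Gψ_eq_rδ (ρ : ℕ → ℝ) (β h : ℝ) (M : ℕ) {u : ℕ → ℕ} (hu : ∀ k, 1 ≤ u k) :
    Gψ ρ β h M u = Real.exp (Ham ρ β h M (fun n => rδ u n)) * rδ u M := by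
  unfold Gψ
  rw [Ham_congr ρ β h M (d' := fun n => rδ u n)
    (fun n h1 h2 => (rδ_eq_dF hu (by omega)).symm),
    (rδ_eq_dF hu (by omega : M < M + 1)).symm]

lemma Fφ_of_eq (ρ : ℕ → ℝ) (β h : ℝ) (N m : ℕ) {u : ℕ → ℕ} (hu : ∀ k, 1 ≤ u k)
    (hm : sS u m = N) :
    Fφ ρ β h N m u = Real.exp (Ham ρ β h N (fun n => rδ u n)) := by
  unfold Fφ
  rw [if_pos hm, one_mul]
  congr 1
  exact Ham_congr ρ β h N fun n h1 h2 => (rδ_eq_dF' hu hm h2).symm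

lemma Fφ_of_ne (ρ : ℕ → ℝ) (β h : ℝ) (N m : ℕ) {u : ℕ → ℕ} (hm : sS u m ≠ N) :
    Fφ ρ β h N m u = 0 := by
  unfold Fφ
  rw [if_neg hm, zero_mul]

lemma sumF_eq (ρ : ℕ → ℝ) (β h : ℝ) (N : ℕ) {u : ℕ → ℕ} (hu : ∀ k, 1 ≤ u k) :
    ∑ m ∈ Finset.range (N + 1), Fφ ρ β h N m u
      = Real.exp (Ham ρ β h N (fun n => rδ u n)) * rδ u N := by
  by_cases hex : ∃ m₀, sS u m₀ = N
  · obtain ⟨m₀, hm₀⟩ := hex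
    have hm₀N : m₀ ≤ N := by have := le_sS hu m₀; omega
    have hmem : m₀ ∈ Finset.range (N + 1) := Finset.mem_range.mpr (by omega)
    rw [Finset.sum_eq_single_of_mem m₀ hmem ?_]
    · unfold Fφ
      rw [if_pos hm₀, one_mul]
      have hδ1 : rδ u N = 1 := by unfold rδ; exact if_pos ⟨m₀, hm₀⟩
      rw [hδ1, mul_one]
      congr 1
      exact Ham_congr ρ β h N fun n h1 h2 => (rδ_eq_dF' hu hm₀ h2).symm
    · intro b _ hb
      unfold Fφ
      rw [if_neg, zero_mul]
      intro hbN
      exact hb ((sS_strictMono hu).injective (hbN.trans hm₀.symm))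
  · push_neg at hex
    have hδ0 : rδ u N = 0 := by unfold rδ; exact if_neg (by push_neg; exact hex)
    rw [hδ0, mul_zero]
    apply Finset.sum_eq_zero
    intro m _
    unfold Fφ
    rw [if_neg (hex m), zero_mul]

end PinAux

open PinAux

/-- Approximate supermultiplicativity of the annealed partition function:
there is a constant `C` depending only on `ρ` and `q` such that
`Z_{N+M}(β,h) ≥ e^{Cβ²} Z_N(β,h) Z_M(β,h)`. -/
theorem annealed_partition_supermultiplicative
    {Ω : Type*} [MeasurableSpace Ω] (P : Measure Ω) [IsProbabilityMeasure P]
    (T : ℕ → Ω → ℕ) (hmeas : ∀ i, Measurable (T i))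
    (hindep : iIndepFun T P)
    (hident : ∀ i, Measure.map (T i) P = Measure.map (T 0) P)
    (K : ℕ → ℝ) (hK0 : K 0 = 0) (hKpos : ∀ n, 1 ≤ n → 0 < K n)
    (hlaw : ∀ n, (P (T 0 ⁻¹' {n})).toReal = K n)
    (hrec : ∑' n : ℕ, K n = 1)  -- recurrence
    (q : ℕ) (ρ : ℕ → ℝ) (hρ : ∀ k, q < k → ρ k = 0) :
    ∃ C : ℝ, ∀ β h : ℝ, 0 ≤ β → ∀ N M : ℕ, 1 ≤ N → 1 ≤ M →
      Real.exp (C * β ^ 2) * Zfun P T ρ β h N * Zfun P T ρ β h M ≤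
        Zfun P T ρ β h (N + M) := by
  classical
  refine ⟨-((q : ℝ) * ∑ k ∈ Finset.Icc 1 q, |ρ k|), ?_⟩
  intro β h hβ N M hN hM
  set cβ : ℝ := Real.exp (-((q : ℝ) * ∑ k ∈ Finset.Icc 1 q, |ρ k|) * β ^ 2) with hcβ
  -- almost everywhere, all inter-arrival times are ≥ 1
  have hae : ∀ᵐ x ∂P, ∀ k, 1 ≤ T k x := by
    rw [MeasureTheory.ae_all_iff]
    intro k
    have h0 : P (T 0 ⁻¹' {0}) = 0 := by
      have h1 := hlaw 0
      rw [hK0] at h1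
      rcases (ENNReal.toReal_eq_zero_iff _).mp h1 with h2 | h2
      · exact h2
      · exact absurd h2 (measure_ne_top P _)
    have hk0 : P (T k ⁻¹' {0}) = 0 := by
      rw [← Measure.map_apply (hmeas k) (measurableSet_singleton 0), hident k,
        Measure.map_apply (hmeas 0) (measurableSet_singleton 0)]
      exact h0
    have hset : {x | ¬ 1 ≤ T k x} = T k ⁻¹' {0} := by
      ext x; simp [Nat.lt_one_iff]
    rw [ae_iff, hset]
    exact hk0
  -- the two block functions
  set F : ℕ → Ω → ℝ := fun m x => Fφ ρ β h N m (fun k => T k x) with hFdef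
  set G : ℕ → Ω → ℝ := fun m x => Gψ ρ β h M (fun k => T (m + k) x) with hGdef
  -- factorizations through finite blocks of coordinates
  have hFfac : ∀ m : ℕ, F m = (fun t : (↑(Finset.range m) → ℕ) =>
      Fφ ρ β h N m (fun k => if hk : k ∈ Finset.range m then t ⟨k, hk⟩ else 0))
        ∘ (fun a (i : ↑(Finset.range m)) => T i a) := by
    intro m
    funext x
    simp only [hFdef, Function.comp]
    apply Fφ_congr
    intro k hk
    rw [dif_pos (Finset.mem_range.mpr hk)]
  have hGfac : ∀ m : ℕ, G m = (fun t : (↑(Finset.Ico m (m + M)) → ℕ) =>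
      Gψ ρ β h M (fun k => if hk : m + k ∈ Finset.Ico m (m + M) then t ⟨m + k, hk⟩ else 0))
        ∘ (fun a (i : ↑(Finset.Ico m (m + M))) => T i a) := by
    intro m
    funext x
    simp only [hGdef, Function.comp]
    apply Gψ_congr
    intro k hk
    rw [dif_pos (Finset.mem_Ico.mpr ⟨by omega, by omega⟩)]
  have hFmeas : ∀ m, Measurable (F m) := by
    intro m
    rw [hFfac m]
    exact (measurable_of_countable _).comp (measurable_pi_lambda _ fun i => hmeas i)
  have hGmeas : ∀ m, Measurable (G m) := by
    intro m
    rw [hGfac m]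
    exact (measurable_of_countable _).comp (measurable_pi_lambda _ fun i => hmeas i)
  have hindFG : ∀ m, IndepFun (F m) (G m) P := by
    intro m
    rw [hFfac m, hGfac m]
    have hdisj : Disjoint (Finset.range m) (Finset.Ico m (m + M)) := by
      rw [Finset.disjoint_left]
      intro a ha hb
      simp only [Finset.mem_range] at ha
      simp only [Finset.mem_Ico] at hb
      omega
    exact (hindep.indepFun_finset (Finset.range m) (Finset.Ico m (m + M)) hdisj hmeas).comp
      (measurable_of_countable _) (measurable_of_countable _)
  -- bounds
  have hF0 : ∀ m x, 0 ≤ F m x := fun m x => Fφ_nonneg ρ β h N m _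
  have hG0 : ∀ m x, 0 ≤ G m x := fun m x => Gψ_nonneg ρ β h M _
  have hFle : ∀ m x, F m x ≤ Real.exp (hamB ρ β h N) := fun m x => Fφ_le ρ β h N m _
  have hGle : ∀ m x, G m x ≤ Real.exp (hamB ρ β h M) := fun m x => Gψ_le ρ β h M _
  have hFint : ∀ m, Integrable (F m) P := fun m =>
    Integrable.mono' (integrable_const _) (hFmeas m).aestronglyMeasurable
      (Filter.Eventually.of_forall fun x => by
        rw [Real.norm_eq_abs, abs_of_nonneg (hF0 m x)]; exact hFle m x)
  have hGint : ∀ m, Integrable (G m) P := fun m =>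
    Integrable.mono' (integrable_const _) (hGmeas m).aestronglyMeasurable
      (Filter.Eventually.of_forall fun x => by
        rw [Real.norm_eq_abs, abs_of_nonneg (hG0 m x)]; exact hGle m x)
  have hFGint : ∀ m, Integrable (fun x => F m x * G m x) P := fun m =>
    Integrable.mono' (integrable_const (Real.exp (hamB ρ β h N) * Real.exp (hamB ρ β h M)))
      ((hFmeas m).mul (hGmeas m)).aestronglyMeasurable
      (Filter.Eventually.of_forall fun x => by
        rw [Real.norm_eq_abs, abs_of_nonneg (mul_nonneg (hF0 m x) (hG0 m x))]
        exact mul_le_mul (hFle m x) (hGle m x) (hG0 m x) (Real.exp_pos _).le)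
  -- each G integral equals Z_M
  have hGZ : ∀ m, ∫ x, G m x ∂P = Zfun P T ρ β h M := by
    intro m
    set ψ : (Fin M → ℕ) → ℝ := fun t =>
      Gψ ρ β h M (fun k => if hk : k < M then t ⟨k, hk⟩ else 0) with hψdef
    have hψm : Measurable ψ := measurable_of_countable _
    have hVm : Measurable (fun x (i : Fin M) => T (m + i) x) :=
      measurable_pi_lambda _ fun i => hmeas _
    have hV0 : Measurable (fun x (i : Fin M) => T i x) :=
      measurable_pi_lambda _ fun i => hmeas _
    have e1 : (fun x => G m x)
        = fun x => ψ ((fun x (i : Fin M) => T (m + i) x) x) := by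
      funext x
      simp only [hGdef, hψdef]
      apply Gψ_congr
      intro k hk
      rw [dif_pos hk]
    rw [e1, ← MeasureTheory.integral_map hVm.aemeasurable hψm.aestronglyMeasurable,
      law_eq P T hmeas hindep hident M m,
      MeasureTheory.integral_map hV0.aemeasurable hψm.aestronglyMeasurable]
    have e2 : (fun x => ψ ((fun x (i : Fin M) => T i x) x))
        = fun x => Gψ ρ β h M (fun k => T k x) := by
      funext x
      simp only [hψdef]
      apply Gψ_congr
      intro k hk
      rw [dif_pos hk]
    rw [e2, Zfun_eq]
    apply integral_congr_ae
    filter_upwards [hae] with x hx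
    exact Gψ_eq_rδ ρ β h M hx
  -- the sum of the F integrals equals Z_N
  have hFZ : ∑ m ∈ Finset.range (N + 1), ∫ x, F m x ∂P = Zfun P T ρ β h N := by
    rw [← MeasureTheory.integral_finset_sum _ (fun m _ => hFint m), Zfun_eq]
    apply integral_congr_ae
    filter_upwards [hae] with x hx
    simpa only [hFdef] using sumF_eq ρ β h N hx
  -- pointwise a.e. inequality
  have hpt : ∀ᵐ x ∂P, ∑ m ∈ Finset.range (N + 1), cβ * (F m x * G m x)
      ≤ Real.exp (Ham ρ β h (N + M) (fun n => rδ (fun k => T k x) n))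
          * rδ (fun k => T k x) (N + M) := by
    filter_upwards [hae] with x hx
    by_cases hex : ∃ m₀, sS (fun k => T k x) m₀ = N
    · obtain ⟨m₀, hm₀⟩ := hex
      have hm₀N : m₀ ≤ N := by have := le_sS hx m₀; omega
      have hsum : ∑ m ∈ Finset.range (N + 1), cβ * (F m x * G m x)
          = cβ * (F m₀ x * G m₀ x) := by
        apply Finset.sum_eq_single_of_mem m₀ (Finset.mem_range.mpr (by omega))
        intro b _ hb
        have hFb : F b x = 0 := by
          simp only [hFdef]
          exact Fφ_of_ne ρ β h N b fun hbN =>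
            hb ((sS_strictMono hx).injective (hbN.trans hm₀.symm))
        rw [hFb, zero_mul, mul_zero]
      rw [hsum]
      have hu' : ∀ k, 1 ≤ T (m₀ + k) x := fun k => hx _
      have hFval : F m₀ x
          = Real.exp (Ham ρ β h N (fun n => rδ (fun k => T k x) n)) := by
        simp only [hFdef]
        exact Fφ_of_eq ρ β h N m₀ hx hm₀
      have hGval : G m₀ x
          = Real.exp (Ham ρ β h M (fun n => rδ (fun k => T k x) (N + n)))
              * rδ (fun k => T k x) (N + M) := by
        simp only [hGdef]
        rw [Gψ_eq_rδ ρ β h M hu']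
        congr 1
        · congr 1
          exact Ham_congr ρ β h M fun n _ _ => (rδ_shift hx hm₀ n).symm
        · exact (rδ_shift hx hm₀ M).symm
      rw [hFval, hGval, hcβ]
      have hexp : Real.exp (-((q : ℝ) * ∑ k ∈ Finset.Icc 1 q, |ρ k|) * β ^ 2)
            * (Real.exp (Ham ρ β h N (fun n => rδ (fun k => T k x) n))
              * (Real.exp (Ham ρ β h M (fun n => rδ (fun k => T k x) (N + n)))
                * rδ (fun k => T k x) (N + M)))
          = Real.exp (Ham ρ β h N (fun n => rδ (fun k => T k x) n)
              + Ham ρ β h M (fun n => rδ (fun k => T k x) (N + n))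
              + -((q : ℝ) * ∑ k ∈ Finset.Icc 1 q, |ρ k|) * β ^ 2)
            * rδ (fun k => T k x) (N + M) := by
        rw [Real.exp_add, Real.exp_add]
        ring
      rw [hexp]
      apply mul_le_mul_of_nonneg_right _ (rδ_nonneg _ _)
      apply Real.exp_le_exp.2
      exact Ham_split q ρ hρ β h N M (fun n => rδ_nonneg _ n) (fun n => rδ_le_one _ n)
    · push_neg at hex
      have hz : ∑ m ∈ Finset.range (N + 1), cβ * (F m x * G m x) = 0 := by
        apply Finset.sum_eq_zero
        intro m _
        have hFb : F m x = 0 := by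
          simp only [hFdef]
          exact Fφ_of_ne ρ β h N m (hex m)
        rw [hFb, zero_mul, mul_zero]
      rw [hz]
      exact mul_nonneg (Real.exp_pos _).le (rδ_nonneg _ _)
  -- integrability of the right-hand side
  have hIZint : Integrable (fun x =>
      Real.exp (Ham ρ β h (N + M) (fun n => rδ (fun k => T k x) n))
        * rδ (fun k => T k x) (N + M)) P := by
    apply Integrable.mono' (integrable_const (Real.exp (hamB ρ β h (N + M))))
      (measurable_IZ hmeas ρ β h (N + M)).aestronglyMeasurable
    apply Filter.Eventually.of_forall
    intro x
    rw [Real.norm_eq_abs,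
      abs_of_nonneg (mul_nonneg (Real.exp_pos _).le (rδ_nonneg _ _))]
    calc Real.exp (Ham ρ β h (N + M) (fun n => rδ (fun k => T k x) n))
          * rδ (fun k => T k x) (N + M)
        ≤ Real.exp (Ham ρ β h (N + M) (fun n => rδ (fun k => T k x) n)) * 1 :=
          mul_le_mul_of_nonneg_left (rδ_le_one _ _) (Real.exp_pos _).le
      _ = Real.exp (Ham ρ β h (N + M) (fun n => rδ (fun k => T k x) n)) := mul_one _
      _ ≤ Real.exp (hamB ρ β h (N + M)) :=
          Real.exp_le_exp.2 (Ham_le ρ β h (N + M)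
            (fun n => rδ_nonneg _ n) (fun n => rδ_le_one _ n))
  -- put things together
  have mono := integral_mono_ae
    (integrable_finset_sum _ fun m _ => (hFGint m).const_mul cβ) hIZint hpt
  have key : ∫ x, ∑ m ∈ Finset.range (N + 1), cβ * (F m x * G m x) ∂P
      = cβ * Zfun P T ρ β h N * Zfun P T ρ β h M := by
    rw [MeasureTheory.integral_finset_sum _ fun m _ => (hFGint m).const_mul cβ]
    have e3 : ∀ m ∈ Finset.range (N + 1), ∫ x, cβ * (F m x * G m x) ∂P
        = cβ * ((∫ x, F m x ∂P) * Zfun P T ρ β h M) := by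
      intro m _
      rw [MeasureTheory.integral_const_mul]
      congr 1
      rw [← hGZ m]
      exact ProbabilityTheory.IndepFun.integral_fun_mul_eq_mul_integral (hindFG m)
        (hFmeas m).aestronglyMeasurable (hGmeas m).aestronglyMeasurable
    rw [Finset.sum_congr rfl e3, ← Finset.mul_sum, ← Finset.sum_mul, hFZ]
    ring
  rw [key] at mono
  rw [Zfun_eq P T ρ β h (N + M)]
  exact mono
end

section
/- Under the assumptions of the previous statement, the annealed free energy F^ann(β,h) = lim_{N→∞} (1/N) log Z_N(β,h) exists and is finite for every h ∈ ℝ and β ≥ 0. -/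
open scoped Classical
open MeasureTheory ProbabilityTheory Filter

open scoped ENNReal
open Finset


/- ### List preliminaries -/

lemma list_sum_range_getD (T : ℕ → ℕ) (l : List ℕ) (hT : ∀ i < l.length, T i = l.getD i 0)
    (m : ℕ) (hm : m ≤ l.length) :
    ∑ k ∈ Finset.range m, T k = (l.take m).sum := by
  induction m with
  | zero => simp
  | succ m ih =>
    have hm' : m < l.length := hm
    rw [Finset.sum_range_succ, ih hm'.le, List.sum_take_succ _ _ hm', hT m hm',
      List.getD_eq_getElem _ _ hm']

lemma list_prefix_eq (l l' : List ℕ) (hle : l.length ≤ l'.length)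
    (h : ∀ i < l.length, l.getD i 0 = l'.getD i 0)
    (hsum : l.sum = l'.sum) (hpos : ∀ x ∈ l', 0 < x) : l = l' := by
  have htake : l = l'.take l.length := by
    apply List.ext_getElem
    · simp [Nat.min_eq_left hle]
    · intro i h1 h2
      have hi : i < l.length := h1
      have := h i hi
      rw [List.getD_eq_getElem _ _ hi, List.getD_eq_getElem _ _ (lt_of_lt_of_le hi hle)] at this
      simpa [List.getElem_take] using this
  have hdrop : (l'.drop l.length).sum = 0 := by
    have := List.sum_take_add_sum_drop l' l.length
    rw [← htake] at this
    omega
  have hnil : l'.drop l.length = [] := by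
    by_contra hne
    obtain ⟨x, hx⟩ := List.exists_mem_of_ne_nil _ hne
    have hx' : x ∈ l' := List.mem_of_mem_drop hx
    have := hpos x hx'
    have : x = 0 := by
      exact (List.sum_eq_zero_iff.1 hdrop) x hx
    omega
  conv_rhs => rw [← List.take_append_drop l.length l', hnil, List.append_nil, ← htake]

lemma list_prod_range_getD (K : ℕ → ℝ) (l : List ℕ) :
    ∏ i ∈ Finset.range l.length, K (l.getD i 0) = (l.map K).prod := by
  induction l with
  | nil => simp
  | cons a l ih =>
    rw [List.map_cons, List.prod_cons, ← ih]
    rw [List.length_cons, Finset.prod_range_succ']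
    simp [mul_comm]

/- ### Combinatorial model -/

lemma list_take_sum_le (l : List ℕ) (m : ℕ) : (l.take m).sum ≤ l.sum := by
  conv_rhs => rw [← List.sum_take_add_sum_drop l m]
  exact Nat.le_add_right _ _

/-- Indicator that `n` is a partial sum of the blocks of `c`. -/
noncomputable def dcomp {N : ℕ} (c : Composition N) (n : ℕ) : ℝ :=
  if ∃ m ≤ c.blocks.length, (c.blocks.take m).sum = n then 1 else 0

lemma dcomp_nonneg {N : ℕ} (c : Composition N) (n : ℕ) : 0 ≤ dcomp c n := by
  unfold dcomp; split <;> norm_num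

lemma dcomp_le_one {N : ℕ} (c : Composition N) (n : ℕ) : dcomp c n ≤ 1 := by
  unfold dcomp; split <;> norm_num

/-- The Hamiltonian of a renewal configuration. -/
noncomputable def Ham {N : ℕ} (ρ : ℕ → ℝ) (β h : ℝ) (c : Composition N) : ℝ :=
  (h + β ^ 2 / 2) * ∑ n ∈ Finset.Icc 1 N, dcomp c n
    + β ^ 2 * ∑ i ∈ Finset.Icc 1 N, ∑ j ∈ Finset.Icc (i + 1) N,
        ρ (j - i) * dcomp c i * dcomp c j

/-- The renewal weight of a composition. -/
noncomputable def Wt (K : ℕ → ℝ) {N : ℕ} (c : Composition N) : ℝ := (c.blocks.map K).prod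

/-- Combinatorial version of the partition function. -/
noncomputable def Scomb (K ρ : ℕ → ℝ) (β h : ℝ) (N : ℕ) : ℝ :=
  ∑ c : Composition N, Wt K c * Real.exp (Ham ρ β h c)

/-- Concatenation of compositions. -/
def capp {N M : ℕ} (c₁ : Composition N) (c₂ : Composition M) : Composition (N + M) :=
  ⟨c₁.blocks ++ c₂.blocks, by
      intro i hi
      rcases List.mem_append.1 hi with hi | hi
      · exact c₁.blocks_pos hi
      · exact c₂.blocks_pos hi, by
      rw [List.sum_append, c₁.blocks_sum, c₂.blocks_sum]⟩

lemma capp_inj {N M : ℕ} : Function.Injective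
    (fun p : Composition N × Composition M => capp p.1 p.2) := by
  rintro ⟨c₁, c₂⟩ ⟨d₁, d₂⟩ hcd
  have hb : c₁.blocks ++ c₂.blocks = d₁.blocks ++ d₂.blocks :=
    congrArg Composition.blocks hcd
  have h1 : c₁.blocks = d₁.blocks := by
    rcases List.append_eq_append_iff.1 hb with ⟨a, ha1, ha2⟩ | ⟨a, ha1, ha2⟩
    · -- d₁.blocks = c₁.blocks ++ a
      have hsum : a.sum = 0 := by
        have := d₁.blocks_sum
        rw [ha1, List.sum_append, c₁.blocks_sum] at this
        omega
      have : a = [] := by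
        rcases List.eq_nil_or_concat a with h | ⟨l, x, rfl⟩
        · exact h
        · exfalso
          have hx : x ∈ d₁.blocks := by rw [ha1]; simp
          have := d₁.blocks_pos hx
          have := List.sum_eq_zero_iff.1 hsum x (by simp)
          omega
      rw [ha1, this, List.append_nil]
    · have hsum : a.sum = 0 := by
        have := c₁.blocks_sum
        rw [ha1, List.sum_append, d₁.blocks_sum] at this
        omega
      have : a = [] := by
        rcases List.eq_nil_or_concat a with h | ⟨l, x, rfl⟩
        · exact h
        · exfalso
          have hx : x ∈ c₁.blocks := by rw [ha1]; simp
          have := c₁.blocks_pos hx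
          have := List.sum_eq_zero_iff.1 hsum x (by simp)
          omega
      rw [ha1, this, List.append_nil]
  have h2 : c₂.blocks = d₂.blocks := by
    have := hb
    rw [h1] at this
    exact List.append_cancel_left this
  have e1 : c₁ = d₁ := Composition.ext h1
  have e2 : c₂ = d₂ := Composition.ext h2
  simp [e1, e2]

lemma Wt_capp (K : ℕ → ℝ) {N M : ℕ} (c₁ : Composition N) (c₂ : Composition M) :
    Wt K (capp c₁ c₂) = Wt K c₁ * Wt K c₂ := by
  simp [Wt, capp]

lemma Wt_nonneg {N : ℕ} (K : ℕ → ℝ) (hK : ∀ n, 0 ≤ K n) (c : Composition N) : 0 ≤ Wt K c := by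
  apply List.prod_nonneg
  intro x hx
  obtain ⟨y, _, rfl⟩ := List.mem_map.1 hx
  exact hK y

lemma dcomp_capp_left {N M : ℕ} (c₁ : Composition N) (c₂ : Composition M)
    {n : ℕ} (hn : n ≤ N) : dcomp (capp c₁ c₂) n = dcomp c₁ n := by
  unfold dcomp
  congr 1
  simp only [eq_iff_iff]
  constructor
  · rintro ⟨m, hm, hsum⟩
    by_cases hml : m ≤ c₁.blocks.length
    · refine ⟨m, hml, ?_⟩
      rwa [capp, List.take_append_of_le_length hml] at hsum
    · push_neg at hml
      -- take m of the appended list contains all of c₁.blocks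
      have : ((c₁.blocks ++ c₂.blocks).take m).sum
          = N + (c₂.blocks.take (m - c₁.blocks.length)).sum := by
        rw [List.take_append, List.sum_append,
          List.take_of_length_le hml.le, c₁.blocks_sum]
      rw [capp] at hsum
      rw [this] at hsum
      have hn' : n = N := by omega
      exact ⟨c₁.blocks.length, le_rfl, by rw [List.take_length, c₁.blocks_sum, hn']⟩
  · rintro ⟨m, hm, hsum⟩
    refine ⟨m, ?_, ?_⟩
    · simp only [capp, List.length_append]; omega
    · rwa [capp, List.take_append_of_le_length hm]

lemma dcomp_capp_right {N M : ℕ} (c₁ : Composition N) (c₂ : Composition M)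
    {n : ℕ} (hn1 : N < n) : dcomp (capp c₁ c₂) n = dcomp c₂ (n - N) := by
  unfold dcomp
  congr 1
  simp only [eq_iff_iff]
  constructor
  · rintro ⟨m, hm, hsum⟩
    have hml : c₁.blocks.length < m := by
      by_contra hc
      push_neg at hc
      rw [capp, List.take_append_of_le_length hc] at hsum
      have := list_take_sum_le c₁.blocks m
      rw [c₁.blocks_sum] at this
      omega
    have hexp : ((c₁.blocks ++ c₂.blocks).take m).sum
        = N + (c₂.blocks.take (m - c₁.blocks.length)).sum := by
      rw [List.take_append, List.sum_append,
        List.take_of_length_le hml.le, c₁.blocks_sum]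
    rw [capp] at hsum
    rw [hexp] at hsum
    refine ⟨m - c₁.blocks.length, ?_, by omega⟩
    have : m ≤ c₁.blocks.length + c₂.blocks.length := by
      simpa [capp, List.length_append] using hm
    omega
  · rintro ⟨m, hm, hsum⟩
    refine ⟨c₁.blocks.length + m, ?_, ?_⟩
    · simp only [capp, List.length_append]; omega
    · rw [capp, List.take_append, List.sum_append,
        List.take_of_length_le (by omega), c₁.blocks_sum]
      have : c₁.blocks.length + m - c₁.blocks.length = m := by omega
      rw [this, hsum]
      omega

noncomputable def Rρ (q : ℕ) (ρ : ℕ → ℝ) : ℝ := ∑ k ∈ Finset.range (q + 1), |ρ k|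

lemma Rρ_nonneg (q : ℕ) (ρ : ℕ → ℝ) : 0 ≤ Rρ q ρ :=
  Finset.sum_nonneg fun _ _ => abs_nonneg _

section rho
variable {q : ℕ} {ρ : ℕ → ℝ} (hρ : ∀ k, q < k → ρ k = 0)
include hρ

lemma inner_abs_le (i a b : ℕ) (hia : i < a) :
    ∑ j ∈ Finset.Icc a b, |ρ (j - i)| ≤ Rρ q ρ := by
  classical
  set s := (Finset.Icc a b).filter (fun j => j - i ≤ q) with hs
  have h1 : ∑ j ∈ Finset.Icc a b, |ρ (j - i)| = ∑ j ∈ s, |ρ (j - i)| := by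
    rw [hs]
    refine (Finset.sum_filter_of_ne ?_).symm
    intro j _ hne
    by_contra hgt
    push_neg at hgt
    exact hne (by rw [hρ _ hgt, abs_zero])
  have h2 : ∑ j ∈ s, |ρ (j - i)| = ∑ k ∈ s.image (· - i), |ρ k| := by
    rw [Finset.sum_image]
    intro x hx y hy hxy
    have hx' : a ≤ x := (Finset.mem_Icc.1 (Finset.mem_filter.1 hx).1).1
    have hy' : a ≤ y := (Finset.mem_Icc.1 (Finset.mem_filter.1 hy).1).1
    simp only at hxy
    omega
  have h3 : s.image (· - i) ⊆ Finset.range (q + 1) := by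
    intro k hk
    obtain ⟨j, hj, rfl⟩ := Finset.mem_image.1 hk
    have := (Finset.mem_filter.1 hj).2
    exact Finset.mem_range.2 (by omega)
  rw [h1, h2]
  exact Finset.sum_le_sum_of_subset_of_nonneg h3 (fun _ _ _ => abs_nonneg _)

lemma inner_term_ge (i a b : ℕ) (hia : i < a) (d e : ℕ → ℝ)
    (hd0 : ∀ n, 0 ≤ d n) (hd1 : ∀ n, d n ≤ 1) (he0 : ∀ n, 0 ≤ e n) (he1 : ∀ n, e n ≤ 1) :
    -(Rρ q ρ) ≤ ∑ j ∈ Finset.Icc a b, ρ (j - i) * d i * e j := by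
  have key : ∀ j ∈ Finset.Icc a b, -(|ρ (j - i)|) ≤ ρ (j - i) * d i * e j := by
    intro j _
    have habs : |ρ (j - i) * d i * e j| ≤ |ρ (j - i)| := by
      rw [abs_mul, abs_mul]
      calc |ρ (j - i)| * |d i| * |e j| ≤ |ρ (j - i)| * 1 * 1 := by
            apply mul_le_mul
            · apply mul_le_mul le_rfl (by rw [abs_of_nonneg (hd0 i)]; exact hd1 i)
                (abs_nonneg _) (abs_nonneg _)
            · rw [abs_of_nonneg (he0 j)]; exact he1 j
            · exact abs_nonneg _
            · positivity
        _ = |ρ (j - i)| := by ring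
    linarith [neg_abs_le (ρ (j - i) * d i * e j)]
  calc -(Rρ q ρ) ≤ -(∑ j ∈ Finset.Icc a b, |ρ (j - i)|) := by
        simpa using inner_abs_le hρ i a b hia
    _ = ∑ j ∈ Finset.Icc a b, -(|ρ (j - i)|) := by rw [Finset.sum_neg_distrib]
    _ ≤ _ := Finset.sum_le_sum key

lemma cross_ge (N M : ℕ) (d : ℕ → ℝ) (hd0 : ∀ n, 0 ≤ d n) (hd1 : ∀ n, d n ≤ 1) :
    -((q : ℝ) * Rρ q ρ) ≤
      ∑ i ∈ Finset.Icc 1 N, ∑ j ∈ Finset.Icc (N + 1) (N + M), ρ (j - i) * d i * d j := by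
  classical
  have hR := Rρ_nonneg q ρ
  have step : ∀ i ∈ Finset.Icc 1 N,
      (if i + q ≤ N then (0 : ℝ) else -(Rρ q ρ)) ≤
        ∑ j ∈ Finset.Icc (N + 1) (N + M), ρ (j - i) * d i * d j := by
    intro i hi
    have hiN := (Finset.mem_Icc.1 hi).2
    by_cases hle : i + q ≤ N
    · have hz : ∀ j ∈ Finset.Icc (N + 1) (N + M), ρ (j - i) * d i * d j = 0 := by
        intro j hj
        have hj' := (Finset.mem_Icc.1 hj).1
        rw [hρ (j - i) (by omega)]
        ring
      rw [if_pos hle, Finset.sum_congr rfl hz]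
      simp
    · rw [if_neg hle]
      exact inner_term_ge hρ i (N + 1) (N + M) (by omega) d d hd0 hd1 hd0 hd1
  have hsum := Finset.sum_le_sum step
  refine le_trans ?_ hsum
  rw [Finset.sum_ite]
  simp only [Finset.sum_const, Finset.sum_neg_distrib]
  have hcard : ((Finset.Icc 1 N).filter (fun i => ¬ i + q ≤ N)).card ≤ q := by
    have hsub : (Finset.Icc 1 N).filter (fun i => ¬ i + q ≤ N) ⊆ Finset.Icc (N + 1 - q) N := by
      intro i hi
      rcases Finset.mem_filter.1 hi with ⟨hi1, hi2⟩
      rcases Finset.mem_Icc.1 hi1 with ⟨h1, h2⟩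
      exact Finset.mem_Icc.2 (by omega)
    calc _ ≤ (Finset.Icc (N + 1 - q) N).card := Finset.card_le_card hsub
      _ = N + 1 - (N + 1 - q) := Nat.card_Icc _ _
      _ ≤ q := by omega
  have h2 : (((Finset.Icc 1 N).filter (fun i => ¬ i + q ≤ N)).card : ℝ) * Rρ q ρ
      ≤ (q : ℝ) * Rρ q ρ :=
    mul_le_mul_of_nonneg_right (by exact_mod_cast hcard) hR
  rw [smul_zero, nsmul_eq_mul, zero_add, mul_neg]
  linarith
end rho

lemma shift_sum (N M : ℕ) (f : ℕ → ℝ) :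
    ∑ n ∈ Finset.Icc (N + 1) (N + M), f (n - N) = ∑ n ∈ Finset.Icc 1 M, f n := by
  refine Finset.sum_nbij' (fun n => n - N) (fun n => n + N) ?_ ?_ ?_ ?_ ?_ <;>
    intros <;> simp_all [Finset.mem_Icc] <;> omega

lemma Icc_split (N M : ℕ) : Finset.Icc 1 (N + M) =
    Finset.Icc 1 N ∪ Finset.Icc (N + 1) (N + M) := by
  ext n; simp [Finset.mem_Icc, Finset.mem_union]; omega

lemma Icc_disj (a N M : ℕ) : Disjoint (Finset.Icc a N) (Finset.Icc (N + 1) (N + M)) := by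
  rw [Finset.disjoint_left]
  intro n hn hn'
  simp [Finset.mem_Icc] at hn hn'
  omega

lemma Icc_split' (i N M : ℕ) (hi : i ≤ N) : Finset.Icc (i + 1) (N + M) =
    Finset.Icc (i + 1) N ∪ Finset.Icc (N + 1) (N + M) := by
  ext n; simp [Finset.mem_Icc, Finset.mem_union]; omega

section main
variable {q : ℕ} {ρ : ℕ → ℝ} {K : ℕ → ℝ} {β h : ℝ}

/-- Splitting the interaction term of a concatenated configuration. -/
lemma Ham_capp_ge (hρ : ∀ k, q < k → ρ k = 0) {N M : ℕ}
    (c₁ : Composition N) (c₂ : Composition M) :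
    Ham ρ β h c₁ + Ham ρ β h c₂ - β ^ 2 * ((q : ℝ) * Rρ q ρ)
      ≤ Ham ρ β h (capp c₁ c₂) := by
  set d : ℕ → ℝ := dcomp (capp c₁ c₂) with hd
  -- the one-body term
  have hiota : ∑ n ∈ Finset.Icc 1 (N + M), d n
      = ∑ n ∈ Finset.Icc 1 N, dcomp c₁ n + ∑ n ∈ Finset.Icc 1 M, dcomp c₂ n := by
    rw [Icc_split N M, Finset.sum_union (Icc_disj 1 N M)]
    congr 1
    · exact Finset.sum_congr rfl fun n hn =>
        dcomp_capp_left c₁ c₂ (Finset.mem_Icc.1 hn).2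
    · rw [← shift_sum N M (dcomp c₂)]
      exact Finset.sum_congr rfl fun n hn => by
        exact dcomp_capp_right c₁ c₂ (by have := (Finset.mem_Icc.1 hn).1; omega)
  -- the two-body term
  have hpair : ∑ i ∈ Finset.Icc 1 N, ∑ j ∈ Finset.Icc (i + 1) N,
        ρ (j - i) * dcomp c₁ i * dcomp c₁ j
      + ∑ i ∈ Finset.Icc 1 M, ∑ j ∈ Finset.Icc (i + 1) M,
        ρ (j - i) * dcomp c₂ i * dcomp c₂ j
      + ∑ i ∈ Finset.Icc 1 N, ∑ j ∈ Finset.Icc (N + 1) (N + M), ρ (j - i) * d i * d j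
      = ∑ i ∈ Finset.Icc 1 (N + M), ∑ j ∈ Finset.Icc (i + 1) (N + M),
        ρ (j - i) * d i * d j := by
    rw [Icc_split N M, Finset.sum_union (Icc_disj 1 N M)]
    have hleft : ∑ i ∈ Finset.Icc 1 N, ∑ j ∈ Finset.Icc (i + 1) (N + M),
          ρ (j - i) * d i * d j
        = ∑ i ∈ Finset.Icc 1 N, (∑ j ∈ Finset.Icc (i + 1) N, ρ (j - i) * d i * d j
          + ∑ j ∈ Finset.Icc (N + 1) (N + M), ρ (j - i) * d i * d j) := by
      refine Finset.sum_congr rfl fun i hi => ?_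
      rw [Icc_split' i N M (Finset.mem_Icc.1 hi).2,
        Finset.sum_union (Icc_disj (i + 1) N M)]
    rw [hleft, Finset.sum_add_distrib]
    have h1 : ∑ i ∈ Finset.Icc 1 N, ∑ j ∈ Finset.Icc (i + 1) N, ρ (j - i) * d i * d j
        = ∑ i ∈ Finset.Icc 1 N, ∑ j ∈ Finset.Icc (i + 1) N,
            ρ (j - i) * dcomp c₁ i * dcomp c₁ j := by
      refine Finset.sum_congr rfl fun i hi => Finset.sum_congr rfl fun j hj => ?_
      rw [hd, dcomp_capp_left c₁ c₂ (Finset.mem_Icc.1 hi).2,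
        dcomp_capp_left c₁ c₂ (Finset.mem_Icc.1 hj).2]
    have h2 : ∑ i ∈ Finset.Icc (N + 1) (N + M), ∑ j ∈ Finset.Icc (i + 1) (N + M),
          ρ (j - i) * d i * d j
        = ∑ i ∈ Finset.Icc 1 M, ∑ j ∈ Finset.Icc (i + 1) M,
            ρ (j - i) * dcomp c₂ i * dcomp c₂ j := by
      have hstep : ∀ i ∈ Finset.Icc (N + 1) (N + M),
          ∑ j ∈ Finset.Icc (i + 1) (N + M), ρ (j - i) * d i * d j
          = ∑ j ∈ Finset.Icc (i - N + 1) M, ρ (j - (i - N)) * dcomp c₂ (i - N) * dcomp c₂ j := by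
        intro i hi
        rcases Finset.mem_Icc.1 hi with ⟨hi1, hi2⟩
        refine Finset.sum_nbij' (fun j => j - N) (fun j => j + N) ?_ ?_ ?_ ?_ ?_
        · intro j hj; rcases Finset.mem_Icc.1 hj with ⟨h1', h2'⟩
          exact Finset.mem_Icc.2 (by omega)
        · intro j hj; rcases Finset.mem_Icc.1 hj with ⟨h1', h2'⟩
          exact Finset.mem_Icc.2 (by omega)
        · intro j hj; rcases Finset.mem_Icc.1 hj with ⟨h1', h2'⟩; omega
        · intro j hj; rcases Finset.mem_Icc.1 hj with ⟨h1', h2'⟩; omega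
        · intro j hj; rcases Finset.mem_Icc.1 hj with ⟨h1', h2'⟩
          have e1 : j - i = j - N - (i - N) := by omega
          rw [hd, dcomp_capp_right c₁ c₂ (by omega : N < i),
            dcomp_capp_right c₁ c₂ (by omega : N < j), e1]
      rw [Finset.sum_congr rfl hstep]
      refine Finset.sum_nbij' (fun i => i - N) (fun i => i + N) ?_ ?_ ?_ ?_ ?_
      · intro i hi; rcases Finset.mem_Icc.1 hi with ⟨h1', h2'⟩
        exact Finset.mem_Icc.2 (by omega)
      · intro i hi; rcases Finset.mem_Icc.1 hi with ⟨h1', h2'⟩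
        exact Finset.mem_Icc.2 (by omega)
      · intro i hi; rcases Finset.mem_Icc.1 hi with ⟨h1', h2'⟩; omega
      · intro i hi; rcases Finset.mem_Icc.1 hi with ⟨h1', h2'⟩; omega
      · intro i hi; rfl
    rw [h1, h2]
    ring
  -- cross-term lower bound
  have hcross : -((q : ℝ) * Rρ q ρ) ≤
      ∑ i ∈ Finset.Icc 1 N, ∑ j ∈ Finset.Icc (N + 1) (N + M), ρ (j - i) * d i * d j :=
    cross_ge hρ N M d (fun n => dcomp_nonneg _ n) (fun n => dcomp_le_one _ n)
  have hβ2 : (0 : ℝ) ≤ β ^ 2 := sq_nonneg β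
  unfold Ham
  rw [hiota, ← hpair]
  nlinarith [hcross, hβ2]
end main

section main
variable {q : ℕ} {ρ : ℕ → ℝ} {K : ℕ → ℝ} {β h : ℝ}

lemma Ham_le (hρ : ∀ k, q < k → ρ k = 0) {N : ℕ} (c : Composition N) :
    Ham ρ β h c ≤ (|h + β ^ 2 / 2| + β ^ 2 * Rρ q ρ) * N := by
  have hβ2 : (0 : ℝ) ≤ β ^ 2 := sq_nonneg β
  have hiota0 : 0 ≤ ∑ n ∈ Finset.Icc 1 N, dcomp c n :=
    Finset.sum_nonneg fun n _ => dcomp_nonneg c n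
  have hiota : ∑ n ∈ Finset.Icc 1 N, dcomp c n ≤ N := by
    calc ∑ n ∈ Finset.Icc 1 N, dcomp c n ≤ ∑ n ∈ Finset.Icc 1 N, 1 :=
          Finset.sum_le_sum fun n _ => dcomp_le_one c n
      _ = N := by simp [Nat.card_Icc]
  have hone : (h + β ^ 2 / 2) * ∑ n ∈ Finset.Icc 1 N, dcomp c n ≤ |h + β ^ 2 / 2| * N := by
    calc (h + β ^ 2 / 2) * ∑ n ∈ Finset.Icc 1 N, dcomp c n
        ≤ |h + β ^ 2 / 2| * ∑ n ∈ Finset.Icc 1 N, dcomp c n :=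
          mul_le_mul_of_nonneg_right (le_abs_self _) hiota0
      _ ≤ |h + β ^ 2 / 2| * N := mul_le_mul_of_nonneg_left hiota (abs_nonneg _)
  have hpair : ∑ i ∈ Finset.Icc 1 N, ∑ j ∈ Finset.Icc (i + 1) N,
      ρ (j - i) * dcomp c i * dcomp c j ≤ (N : ℝ) * Rρ q ρ := by
    calc ∑ i ∈ Finset.Icc 1 N, ∑ j ∈ Finset.Icc (i + 1) N,
          ρ (j - i) * dcomp c i * dcomp c j
        ≤ ∑ i ∈ Finset.Icc 1 N, Rρ q ρ := by
          refine Finset.sum_le_sum fun i _ => ?_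
          calc ∑ j ∈ Finset.Icc (i + 1) N, ρ (j - i) * dcomp c i * dcomp c j
              ≤ ∑ j ∈ Finset.Icc (i + 1) N, |ρ (j - i)| := by
                refine Finset.sum_le_sum fun j _ => ?_
                have h1 : |ρ (j - i) * dcomp c i * dcomp c j| ≤ |ρ (j - i)| := by
                  rw [abs_mul, abs_mul]
                  have d1 : |dcomp c i| ≤ 1 := by
                    rw [abs_of_nonneg (dcomp_nonneg c i)]; exact dcomp_le_one c i
                  have d2 : |dcomp c j| ≤ 1 := by
                    rw [abs_of_nonneg (dcomp_nonneg c j)]; exact dcomp_le_one c j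
                  calc |ρ (j - i)| * |dcomp c i| * |dcomp c j|
                      ≤ |ρ (j - i)| * |dcomp c j| := mul_le_mul_of_nonneg_right
                        (mul_le_of_le_one_right (abs_nonneg _) d1) (abs_nonneg _)
                    _ ≤ |ρ (j - i)| := mul_le_of_le_one_right (abs_nonneg _) d2
                exact le_trans (le_abs_self _) h1
            _ ≤ Rρ q ρ := inner_abs_le hρ i (i + 1) N (by omega)
      _ = (N : ℝ) * Rρ q ρ := by simp [Nat.card_Icc, Finset.sum_const, nsmul_eq_mul]
  unfold Ham
  have := mul_le_mul_of_nonneg_left hpair hβ2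
  nlinarith

lemma K_nonneg (hK0 : K 0 = 0) (hKpos : ∀ n, 1 ≤ n → 0 < K n) : ∀ n, 0 ≤ K n := by
  intro n
  rcases Nat.eq_zero_or_pos n with rfl | hn
  · rw [hK0]
  · exact (hKpos n hn).le

lemma Scomb_pos (hK0 : K 0 = 0) (hKpos : ∀ n, 1 ≤ n → 0 < K n) (N : ℕ) :
    0 < Scomb K ρ β h N := by
  refine Finset.sum_pos' (fun c _ => mul_nonneg (Wt_nonneg K (K_nonneg hK0 hKpos) c)
    (Real.exp_pos _).le) ⟨Composition.ones N, Finset.mem_univ _, ?_⟩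
  apply mul_pos _ (Real.exp_pos _)
  have : Wt K (Composition.ones N) = K 1 ^ N := by
    simp [Wt, Composition.ones, List.map_replicate, List.prod_replicate]
  rw [this]
  exact pow_pos (hKpos 1 le_rfl) N

lemma Scomb_le (hρ : ∀ k, q < k → ρ k = 0) (hK0 : K 0 = 0)
    (hKpos : ∀ n, 1 ≤ n → 0 < K n) {N : ℕ}
    (hsumW : ∑ c : Composition N, Wt K c ≤ 1) :
    Scomb K ρ β h N ≤ Real.exp ((|h + β ^ 2 / 2| + β ^ 2 * Rρ q ρ) * N) := by
  set D := |h + β ^ 2 / 2| + β ^ 2 * Rρ q ρ with hD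
  calc Scomb K ρ β h N ≤ ∑ c : Composition N, Wt K c * Real.exp (D * N) := by
        refine Finset.sum_le_sum fun c _ => ?_
        exact mul_le_mul_of_nonneg_left (Real.exp_le_exp.2 (Ham_le hρ c))
          (Wt_nonneg K (K_nonneg hK0 hKpos) c)
    _ = (∑ c : Composition N, Wt K c) * Real.exp (D * N) := by
        rw [Finset.sum_mul]
    _ ≤ 1 * Real.exp (D * N) :=
        mul_le_mul_of_nonneg_right hsumW (Real.exp_pos _).le
    _ = Real.exp (D * N) := one_mul _

lemma Scomb_supermul (hρ : ∀ k, q < k → ρ k = 0) (hK0 : K 0 = 0)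
    (hKpos : ∀ n, 1 ≤ n → 0 < K n) (N M : ℕ) :
    Real.exp (-(β ^ 2 * ((q : ℝ) * Rρ q ρ))) * (Scomb K ρ β h N * Scomb K ρ β h M)
      ≤ Scomb K ρ β h (N + M) := by
  have hKn := K_nonneg hK0 hKpos
  have step1 : ∑ p : Composition N × Composition M,
      Wt K (capp p.1 p.2) * Real.exp (Ham ρ β h (capp p.1 p.2)) ≤ Scomb K ρ β h (N + M) := by
    have himg : ∑ c ∈ Finset.univ.image
          (fun p : Composition N × Composition M => capp p.1 p.2),
          Wt K c * Real.exp (Ham ρ β h c)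
        = ∑ p : Composition N × Composition M,
          Wt K (capp p.1 p.2) * Real.exp (Ham ρ β h (capp p.1 p.2)) :=
      Finset.sum_image (fun x _ y _ hxy => capp_inj hxy)
    rw [← himg]
    exact Finset.sum_le_sum_of_subset_of_nonneg (Finset.subset_univ _)
      fun c _ _ => mul_nonneg (Wt_nonneg K hKn c) (Real.exp_pos _).le
  refine le_trans ?_ step1
  have step2 : ∀ p : Composition N × Composition M,
      Real.exp (-(β ^ 2 * ((q : ℝ) * Rρ q ρ))) *
        ((Wt K p.1 * Real.exp (Ham ρ β h p.1)) * (Wt K p.2 * Real.exp (Ham ρ β h p.2)))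
      ≤ Wt K (capp p.1 p.2) * Real.exp (Ham ρ β h (capp p.1 p.2)) := by
    rintro ⟨c₁, c₂⟩
    rw [Wt_capp]
    have hexp : Real.exp (-(β ^ 2 * ((q : ℝ) * Rρ q ρ))) *
        (Real.exp (Ham ρ β h c₁) * Real.exp (Ham ρ β h c₂))
        ≤ Real.exp (Ham ρ β h (capp c₁ c₂)) := by
      rw [← Real.exp_add, ← Real.exp_add]
      apply Real.exp_le_exp.2
      have := Ham_capp_ge (β := β) (h := h) hρ c₁ c₂
      linarith
    calc Real.exp (-(β ^ 2 * ((q : ℝ) * Rρ q ρ))) *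
          ((Wt K c₁ * Real.exp (Ham ρ β h c₁)) * (Wt K c₂ * Real.exp (Ham ρ β h c₂)))
        = (Wt K c₁ * Wt K c₂) * (Real.exp (-(β ^ 2 * ((q : ℝ) * Rρ q ρ))) *
            (Real.exp (Ham ρ β h c₁) * Real.exp (Ham ρ β h c₂))) := by ring
      _ ≤ (Wt K c₁ * Wt K c₂) * Real.exp (Ham ρ β h (capp c₁ c₂)) :=
          mul_le_mul_of_nonneg_left hexp (mul_nonneg (Wt_nonneg K hKn c₁) (Wt_nonneg K hKn c₂))
  calc Real.exp (-(β ^ 2 * ((q : ℝ) * Rρ q ρ))) * (Scomb K ρ β h N * Scomb K ρ β h M)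
      = ∑ p : Composition N × Composition M,
          Real.exp (-(β ^ 2 * ((q : ℝ) * Rρ q ρ))) *
            ((Wt K p.1 * Real.exp (Ham ρ β h p.1)) * (Wt K p.2 * Real.exp (Ham ρ β h p.2))) := by
        rw [Scomb, Scomb, Finset.sum_mul_sum, ← Finset.mul_sum]
        rw [Fintype.sum_prod_type]
    _ ≤ _ := Finset.sum_le_sum fun p _ => step2 p
end main


/-- The event that the first renewal gaps are given by the blocks of `c`. -/
def Ev {Ω : Type*} (T : ℕ → Ω → ℕ) {N : ℕ} (c : Composition N) : Set Ω :=
  ⋂ i ∈ Finset.range c.blocks.length, T i ⁻¹' {c.blocks.getD i 0}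

lemma mem_Ev {Ω : Type*} {T : ℕ → Ω → ℕ} {N : ℕ} {c : Composition N} {x : Ω} :
    x ∈ Ev T c ↔ ∀ i < c.blocks.length, T i x = c.blocks.getD i 0 := by
  simp [Ev]

lemma measurableSet_Ev {Ω : Type*} [MeasurableSpace Ω] {T : ℕ → Ω → ℕ}
    (hmeas : ∀ i, Measurable (T i)) {N : ℕ} (c : Composition N) :
    MeasurableSet (Ev T c) :=
  MeasurableSet.biInter (Finset.range c.blocks.length).countable_toSet
    fun i _ => (hmeas i) (measurableSet_singleton _)

lemma Ev_renewal {Ω : Type*} {T : ℕ → Ω → ℕ} {N : ℕ} {c : Composition N} {x : Ω}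
    (hx : x ∈ Ev T c) {n : ℕ} (hn : n ≤ N) : renewalδ T n x = dcomp c n := by
  rw [mem_Ev] at hx
  have hsum : ∀ m ≤ c.blocks.length, ∑ k ∈ Finset.range m, T k x = (c.blocks.take m).sum :=
    list_sum_range_getD (fun i => T i x) c.blocks (fun i hi => hx i hi)
  unfold renewalδ dcomp
  congr 1
  simp only [eq_iff_iff]
  constructor
  · rintro ⟨m, hm⟩
    by_cases hml : m ≤ c.blocks.length
    · exact ⟨m, hml, by rw [← hsum m hml, hm]⟩
    · push_neg at hml
      have hge : ∑ k ∈ Finset.range m, T k x ≥ N := by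
        have hsplit := Finset.sum_range_add_sum_Ico (fun k => T k x) hml.le
        have h2 := hsum c.blocks.length le_rfl
        rw [List.take_length, c.blocks_sum] at h2
        omega
      have hn' : n = N := by omega
      exact ⟨c.blocks.length, le_rfl, by rw [List.take_length, c.blocks_sum, hn']⟩
  · rintro ⟨m, hm, hs⟩
    exact ⟨m, by rw [hsum m hm, hs]⟩

lemma Ev_renewal_top {Ω : Type*} {T : ℕ → Ω → ℕ} {N : ℕ} {c : Composition N} {x : Ω}
    (hx : x ∈ Ev T c) : renewalδ T N x = 1 := by
  rw [Ev_renewal hx le_rfl]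
  unfold dcomp
  rw [if_pos ⟨c.blocks.length, le_rfl, by rw [List.take_length, c.blocks_sum]⟩]

lemma Ev_disjoint {Ω : Type*} {T : ℕ → Ω → ℕ} {N : ℕ} {c c' : Composition N} {x : Ω}
    (hx : x ∈ Ev T c) (hx' : x ∈ Ev T c') : c = c' := by
  rw [mem_Ev] at hx hx'
  rcases le_total c.blocks.length c'.blocks.length with hle | hle
  · refine Composition.ext ?_
    refine list_prefix_eq _ _ hle (fun i hi => ?_) (by rw [c.blocks_sum, c'.blocks_sum])
      (fun y hy => c'.blocks_pos hy)
    rw [← hx i hi, ← hx' i (lt_of_lt_of_le hi hle)]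
  · refine (Composition.ext ?_)
    refine ((list_prefix_eq _ _ hle (fun i hi => ?_)
      (by rw [c.blocks_sum, c'.blocks_sum]) (fun y hy => c.blocks_pos hy)).symm)
    rw [← hx' i hi, ← hx i (lt_of_lt_of_le hi hle)]

lemma Ev_cover {Ω : Type*} {T : ℕ → Ω → ℕ} {N : ℕ} {x : Ω}
    (hx : ∀ i, 1 ≤ T i x) (hren : ∃ m : ℕ, ∑ k ∈ Finset.range m, T k x = N) :
    ∃ c : Composition N, x ∈ Ev T c := by
  obtain ⟨m, hm⟩ := hren
  refine ⟨⟨List.ofFn (fun k : Fin m => T k x), ?_, ?_⟩, ?_⟩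
  · intro i hi
    obtain ⟨k, rfl⟩ := List.mem_ofFn.1 hi
    exact hx k
  · rw [List.sum_ofFn]
    exact (Fin.sum_univ_eq_sum_range (fun i => T i x) m).trans hm
  · rw [mem_Ev]
    intro i hi
    simp only [List.length_ofFn] at hi
    rw [List.getD_eq_getElem _ _ (by simpa [List.length_ofFn] using hi), List.getElem_ofFn]

lemma Ev_prob {Ω : Type*} [MeasurableSpace Ω] {P : Measure Ω} [IsProbabilityMeasure P]
    {T : ℕ → Ω → ℕ} (hmeas : ∀ i, Measurable (T i))
    (hindep : iIndepFun T P)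
    (hident : ∀ i, Measure.map (T i) P = Measure.map (T 0) P)
    {K : ℕ → ℝ} (hlaw : ∀ n, (P (T 0 ⁻¹' {n})).toReal = K n)
    {N : ℕ} (c : Composition N) : (P (Ev T c)).toReal = Wt K c := by
  have hsingle : ∀ i v, (P (T i ⁻¹' {v})).toReal = K v := by
    intro i v
    have h1 : P (T i ⁻¹' {v}) = Measure.map (T i) P {v} :=
      (Measure.map_apply (hmeas i) (measurableSet_singleton v)).symm
    have h2 : Measure.map (T 0) P {v} = P (T 0 ⁻¹' {v}) :=
      Measure.map_apply (hmeas 0) (measurableSet_singleton v)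
    rw [h1, hident i, h2, hlaw]
  have hP : P (Ev T c) = ∏ i ∈ Finset.range c.blocks.length, P (T i ⁻¹' {c.blocks.getD i 0}) := by
    exact hindep.meas_biInter fun i _ => ⟨{c.blocks.getD i 0}, measurableSet_singleton _, rfl⟩
  rw [hP, ENNReal.toReal_prod]
  rw [Finset.prod_congr rfl fun i _ => hsingle i (c.blocks.getD i 0)]
  exact list_prod_range_getD K c.blocks

lemma sum_Ev_le_one {Ω : Type*} [MeasurableSpace Ω] {P : Measure Ω} [IsProbabilityMeasure P]
    {T : ℕ → Ω → ℕ} (hmeas : ∀ i, Measurable (T i)) (N : ℕ) :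
    ∑ c : Composition N, (P (Ev T c)).toReal ≤ 1 := by
  have hdisj : ((Finset.univ : Finset (Composition N)) : Set (Composition N)).PairwiseDisjoint (Ev T) := by
    intro c _ c' _ hne
    rw [Function.onFun, Set.disjoint_left]
    intro x hx hx'
    exact hne (Ev_disjoint hx hx')
  have hsum : ∑ c : Composition N, P (Ev T c)
      = P (⋃ c ∈ (Finset.univ : Finset (Composition N)), Ev T c) :=
    (measure_biUnion_finset hdisj fun c _ => measurableSet_Ev hmeas c).symm
  have h1 : ∑ c : Composition N, (P (Ev T c)).toReal
      = (∑ c : Composition N, P (Ev T c)).toReal := by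
    rw [ENNReal.toReal_sum]
    intro c _
    exact measure_ne_top P _
  rw [h1, hsum]
  calc (P _).toReal ≤ ((1 : ENNReal)).toReal := ENNReal.toReal_mono ENNReal.one_ne_top prob_le_one
    _ = 1 := by simp


section main
variable {Ω : Type*} [MeasurableSpace Ω] {P : Measure Ω} [IsProbabilityMeasure P]
  {T : ℕ → Ω → ℕ} {K : ℕ → ℝ}

lemma ae_T_pos (hmeas : ∀ i, Measurable (T i))
    (hident : ∀ i, Measure.map (T i) P = Measure.map (T 0) P)
    (hK0 : K 0 = 0) (hlaw : ∀ n, (P (T 0 ⁻¹' {n})).toReal = K n) :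
    ∀ᵐ x ∂P, ∀ i, 1 ≤ T i x := by
  rw [ae_all_iff]
  intro i
  have h0 : P (T i ⁻¹' {0}) = 0 := by
    have h1 : P (T i ⁻¹' {0}) = Measure.map (T i) P {0} :=
      (Measure.map_apply (hmeas i) (measurableSet_singleton 0)).symm
    have h2 : Measure.map (T 0) P {0} = P (T 0 ⁻¹' {0}) :=
      Measure.map_apply (hmeas 0) (measurableSet_singleton 0)
    rw [h1, hident i, h2]
    have := hlaw 0
    rw [hK0] at this
    rcases (ENNReal.toReal_eq_zero_iff _).1 this with h | h
    · exact h
    · exact absurd h (measure_ne_top P _)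
  rw [ae_iff]
  convert h0 using 2
  ext x
  simp only [Set.mem_setOf_eq, Set.mem_preimage, Set.mem_singleton_iff]
  omega

lemma Zfun_eq_Scomb (hmeas : ∀ i, Measurable (T i))
    (hindep : iIndepFun T P)
    (hident : ∀ i, Measure.map (T i) P = Measure.map (T 0) P)
    (hK0 : K 0 = 0) (hlaw : ∀ n, (P (T 0 ⁻¹' {n})).toReal = K n)
    (ρ : ℕ → ℝ) (β h : ℝ) (N : ℕ) :
    Zfun P T ρ β h N = Scomb K ρ β h N := by
  set g : Ω → ℝ := fun x => ∑ c : Composition N,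
    (Ev T c).indicator (fun _ => Real.exp (Ham ρ β h c)) x with hg
  have hfg : (fun x => Real.exp ((h + β ^ 2 / 2) * ∑ n ∈ Finset.Icc 1 N, renewalδ T n x
      + β ^ 2 * ∑ i ∈ Finset.Icc 1 N, ∑ j ∈ Finset.Icc (i + 1) N,
          ρ (j - i) * renewalδ T i x * renewalδ T j x) * renewalδ T N x) =ᵐ[P] g := by
    filter_upwards [ae_T_pos hmeas hident hK0 hlaw] with x hx
    by_cases hc : ∃ c : Composition N, x ∈ Ev T c
    · obtain ⟨c, hcx⟩ := hc
      have h1 : ∑ n ∈ Finset.Icc 1 N, renewalδ T n x = ∑ n ∈ Finset.Icc 1 N, dcomp c n :=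
        Finset.sum_congr rfl fun n hn => Ev_renewal hcx (Finset.mem_Icc.1 hn).2
      have h2 : ∑ i ∈ Finset.Icc 1 N, ∑ j ∈ Finset.Icc (i + 1) N,
            ρ (j - i) * renewalδ T i x * renewalδ T j x
          = ∑ i ∈ Finset.Icc 1 N, ∑ j ∈ Finset.Icc (i + 1) N,
            ρ (j - i) * dcomp c i * dcomp c j := by
        refine Finset.sum_congr rfl fun i hi => Finset.sum_congr rfl fun j hj => ?_
        rw [Ev_renewal hcx (Finset.mem_Icc.1 hi).2, Ev_renewal hcx (Finset.mem_Icc.1 hj).2]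
      rw [h1, h2, Ev_renewal_top hcx, mul_one]
      have hgx : g x = Real.exp (Ham ρ β h c) := by
        rw [hg]
        dsimp only
        rw [Finset.sum_eq_single_of_mem c (Finset.mem_univ c)]
        · exact Set.indicator_of_mem hcx _
        · intro c' _ hne
          exact Set.indicator_of_notMem (fun hmem => hne (Ev_disjoint hmem hcx)) _
      rw [hgx, Ham]
    · have hδ : renewalδ T N x = 0 := by
        unfold renewalδ
        rw [if_neg]
        intro hex
        exact hc (Ev_cover hx hex)
      have hgx : g x = 0 := by
        rw [hg]
        dsimp only
        refine Finset.sum_eq_zero fun c _ => ?_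
        exact Set.indicator_of_notMem (fun hmem => hc ⟨c, hmem⟩) _
      rw [hδ, hgx, mul_zero]
  rw [Zfun, integral_congr_ae hfg, hg]
  rw [integral_finset_sum _ (fun c _ =>
    (integrable_const (Real.exp (Ham ρ β h c))).indicator (measurableSet_Ev hmeas c))]
  rw [Scomb]
  refine Finset.sum_congr rfl fun c _ => ?_
  rw [integral_indicator_const _ (measurableSet_Ev hmeas c), smul_eq_mul, measureReal_def,
    Ev_prob hmeas hindep hident hlaw c, mul_comm]

lemma sum_Wt_le_one (hmeas : ∀ i, Measurable (T i))
    (hindep : iIndepFun T P)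
    (hident : ∀ i, Measure.map (T i) P = Measure.map (T 0) P)
    (hlaw : ∀ n, (P (T 0 ⁻¹' {n})).toReal = K n) (N : ℕ) :
    ∑ c : Composition N, Wt K c ≤ 1 := by
  have := sum_Ev_le_one (P := P) (T := T) hmeas N
  rwa [Finset.sum_congr rfl fun c _ => (Ev_prob hmeas hindep hident hlaw c).symm]
end main

/-- Existence and finiteness of the annealed free energy
`F^ann(β,h) = lim_N (1/N) log Z_N(β,h)`. -/
theorem annealed_free_energy_exists
    {Ω : Type*} [MeasurableSpace Ω] (P : Measure Ω) [IsProbabilityMeasure P]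
    (T : ℕ → Ω → ℕ) (hmeas : ∀ i, Measurable (T i))
    (hindep : iIndepFun T P)
    (hident : ∀ i, Measure.map (T i) P = Measure.map (T 0) P)
    (K : ℕ → ℝ) (hK0 : K 0 = 0) (hKpos : ∀ n, 1 ≤ n → 0 < K n)
    (hlaw : ∀ n, (P (T 0 ⁻¹' {n})).toReal = K n)
    (hrec : ∑' n : ℕ, K n = 1)  -- recurrence
    (q : ℕ) (ρ : ℕ → ℝ) (hρ : ∀ k, q < k → ρ k = 0)
    (β h : ℝ) (hβ : 0 ≤ β) :
    ∃ Fann : ℝ, Tendsto (fun N : ℕ => Real.log (Zfun P T ρ β h N) / N)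
      atTop (nhds Fann) := by
  have hR := Rρ_nonneg q ρ
  set R := Rρ q ρ with hRdef
  set C : ℝ := β ^ 2 * ((q : ℝ) * R) with hC
  set D : ℝ := |h + β ^ 2 / 2| + β ^ 2 * R with hD
  have hCnn : 0 ≤ C := by positivity
  have hDnn : 0 ≤ D := by positivity
  set Z : ℕ → ℝ := fun N => Zfun P T ρ β h N with hZ
  have hzs : ∀ N, Z N = Scomb K ρ β h N := fun N =>
    Zfun_eq_Scomb hmeas hindep hident hK0 hlaw ρ β h N
  have hpos : ∀ N, 0 < Z N := fun N => (hzs N) ▸ Scomb_pos hK0 hKpos N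
  have hle : ∀ N, Z N ≤ Real.exp (D * N) := fun N => (hzs N) ▸
    Scomb_le hρ hK0 hKpos (sum_Wt_le_one hmeas hindep hident hlaw N)
  have hsup : ∀ N M, Real.exp (-C) * (Z N * Z M) ≤ Z (N + M) := by
    intro N M
    rw [hzs N, hzs M, hzs (N + M)]
    exact Scomb_supermul hρ hK0 hKpos N M
  set u : ℕ → ℝ := fun n => C - Real.log (Z n) with hu
  have hsub : Subadditive u := by
    intro m n
    have h1 := hsup m n
    have h2 : Real.log (Real.exp (-C) * (Z m * Z n)) ≤ Real.log (Z (m + n)) :=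
      Real.log_le_log (mul_pos (Real.exp_pos _) (mul_pos (hpos m) (hpos n))) h1
    rw [Real.log_mul (Real.exp_ne_zero _) (mul_pos (hpos m) (hpos n)).ne',
      Real.log_mul (hpos m).ne' (hpos n).ne', Real.log_exp] at h2
    simp only [hu]
    linarith
  have hlogle : ∀ n : ℕ, Real.log (Z n) ≤ D * n := fun n =>
    (Real.log_le_iff_le_exp (hpos n)).2 (hle n)
  have hbdd : BddBelow (Set.range fun n : ℕ => u n / n) := by
    refine ⟨-D, ?_⟩
    rintro y ⟨n, rfl⟩
    rcases Nat.eq_zero_or_pos n with rfl | hn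
    · simp only [Nat.cast_zero, div_zero]
      linarith
    · have hcast : (0 : ℝ) < n := by exact_mod_cast hn
      rw [le_div_iff₀ hcast]
      have := hlogle n
      simp only [hu]
      nlinarith [mul_nonneg hCnn hcast.le]
  have hlim := hsub.tendsto_lim hbdd
  refine ⟨-hsub.lim, ?_⟩
  have h2 : Tendsto (fun n : ℕ => C / n) atTop (nhds 0) :=
    tendsto_const_div_atTop_nhds_zero_nat C
  have h3 : Tendsto (fun n : ℕ => C / n - u n / n) atTop (nhds (0 - hsub.lim)) :=
    h2.sub hlim
  rw [zero_sub] at h3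
  refine h3.congr fun n => ?_
  rw [div_sub_div_same]
  congr 1
  simp only [hu]
  ring
end

section
/- Let μ* be the invariant probability measure of the finite irreducible stochastic matrix Q̃*_β(s̄*,t̄*) = Q*_β(s̄*,t̄*) ν*(t̄*)/(λ(β) ν*(s̄*)). Define μ on (ℕ*)^q by μ(t̄) = μ*(t̄*) ∏_{j=0}^{q−1} K(t_j)/K(t*_j). Then μ is a probability measure and is invariant for the kernel Q̃_β. -/
open scoped Classical
open Filter Matrix
set_option maxHeartbeats 1000000

lemma hasSum_mul_nonneg {ι ι' : Type*} {u : ι → ℝ} {v : ι' → ℝ} {A B : ℝ}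
    (hu0 : ∀ i, 0 ≤ u i) (hv0 : ∀ i, 0 ≤ v i) (hu : HasSum u A) (hv : HasSum v B) :
    HasSum (fun p : ι × ι' => u p.1 * v p.2) (A * B) := by
  have hnu : Summable fun i => ‖u i‖ := by
    have : (fun i => ‖u i‖) = u := funext fun i => Real.norm_of_nonneg (hu0 i)
    rw [this]; exact hu.summable
  have hnv : Summable fun i => ‖v i‖ := by
    have : (fun i => ‖v i‖) = v := funext fun i => Real.norm_of_nonneg (hv0 i)
    rw [this]; exact hv.summable
  have hs : Summable (fun p : ι × ι' => u p.1 * v p.2) := summable_mul_of_summable_norm hnu hnv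
  have ht := tsum_mul_tsum_of_summable_norm hnu hnv
  rw [hu.tsum_eq, hv.tsum_eq] at ht
  exact ht ▸ hs.hasSum

lemma hasSum_pi_nat (q : ℕ) : ∀ (f : Fin q → ℕ → ℝ) (a : Fin q → ℝ),
    (∀ j n, 0 ≤ f j n) → (∀ j, HasSum (f j) (a j)) →
    HasSum (fun t : Fin q → ℕ => ∏ j, f j (t j)) (∏ j, a j) := by
  induction q with
  | zero =>
    intro f a _ _
    have h1 : (fun t : Fin 0 → ℕ => ∏ j, f j (t j)) = fun _ => (1 : ℝ) := by
      funext t; simp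
    rw [h1]
    have := hasSum_single (f := fun _ : Fin 0 → ℕ => (1 : ℝ)) default
      (fun b hb => absurd (Subsingleton.elim b default) hb)
    simpa using this
  | succ q ih =>
    intro f a h0 h
    have IH := ih (fun j => f j.succ) (fun j => a j.succ)
      (fun j n => h0 _ n) (fun j => h _)
    have key : HasSum (fun p : ℕ × (Fin q → ℕ) => f 0 p.1 * ∏ j : Fin q, f j.succ (p.2 j))
        (a 0 * ∏ j : Fin q, a j.succ) := by
      apply hasSum_mul_nonneg (h0 0) (fun t => Finset.prod_nonneg fun j _ => h0 _ _) (h 0) IH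
    rw [Fin.prod_univ_succ]
    refine (Fin.consEquiv (fun _ : Fin (q + 1) => ℕ)).hasSum_iff.mp ?_
    have hco : ((fun t : Fin (q + 1) → ℕ => ∏ j, f j (t j)) ∘
        (Fin.consEquiv (fun _ : Fin (q + 1) => ℕ)))
        = fun p : ℕ × (Fin q → ℕ) => f 0 p.1 * ∏ j, f j.succ (p.2 j) := by
      funext p
      simp [Fin.consEquiv, Fin.prod_univ_succ]
    rw [hco]
    exact key


/-- `K(⋆) = ∑_{n>q} K(n)` for the cemetery state `0`; `K(e)` for `e ∈ {1,…,q}`.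
States in `Fin (q+1)`: `0` is the cemetery state `⋆`, and `e ≥ 1` codes a jump of size `e`. -/
noncomputable def Kstar (q : ℕ) (K : ℕ → ℝ) (e : Fin (q + 1)) : ℝ :=
  if e.1 = 0 then ∑' n : ℕ, K (n + q + 1) else K e.1

/-- `G(t̄*) = ∑_{k=0}^{q−1} ρ_{t*_0+⋯+t*_k}` with the conventions `ρ_⋆ = 0`, `⋆ + t = ⋆`. -/
noncomputable def Gfun (q : ℕ) (ρ : ℕ → ℝ) (t : Fin q → Fin (q + 1)) : ℝ :=
  ∑ k : Fin q, if ∀ j, j ≤ k → (t j).1 ≠ 0 then ρ (∑ j ∈ Finset.Iic k, (t j).1) else 0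

/-- Last coordinate `t_{q−1}` of a `q`-tuple. -/
noncomputable def lastE {q : ℕ} (t : Fin q → Fin (q + 1)) : Fin (q + 1) :=
  if h : 0 < q then t ⟨q - 1, by omega⟩ else 0

/-- The shift consistency condition `s_i = t_{i−1}` for `1 ≤ i ≤ q−1`. -/
def shiftOK {q : ℕ} (s t : Fin q → Fin (q + 1)) : Prop :=
  ∀ i : Fin q, 1 ≤ i.1 → s i = t ⟨i.1 - 1, lt_of_le_of_lt (Nat.sub_le _ _) i.isLt⟩

/-- The transfer matrix `Q*_β` on `E^q`, `E = {1,…,q,⋆}`: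
`Q*_β(s̄*,t̄*) = e^{β²G(t̄*)} (K(t*_{q−1})/(1−K(∞))) ∏_{i=1}^{q−1} 1_{s*_i=t*_{i−1}}`. -/
noncomputable def Qmat (q : ℕ) (β : ℝ) (K ρ : ℕ → ℝ) (Kinf : ℝ) :
    Matrix (Fin q → Fin (q + 1)) (Fin q → Fin (q + 1)) ℝ := fun s t =>
  Real.exp (β ^ 2 * Gfun q ρ t) * (Kstar q K (lastE t) / (1 - Kinf)) *
    (if shiftOK s t then 1 else 0)

/-- A nonnegative matrix is irreducible if some power connects any two indices. -/
def MatIrreducible {n : Type*} [Fintype n] [DecidableEq n] (A : Matrix n n ℝ) : Prop :=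
  ∀ i j, ∃ k : ℕ, 0 < k ∧ 0 < (A ^ k) i j

/-- A nonnegative matrix is primitive if some power has all entries positive. -/
def MatPrimitive {n : Type*} [Fintype n] [DecidableEq n] (A : Matrix n n ℝ) : Prop :=
  ∃ k : ℕ, 0 < k ∧ ∀ i j, 0 < (A ^ k) i j

/-- Truncation `t ↦ t*`: values in `{1,…,q}` are kept, larger values are sent to `⋆ = 0`. -/
noncomputable def truncF (q : ℕ) (t : ℕ) : Fin (q + 1) :=
  if h : 1 ≤ t ∧ t ≤ q then ⟨t, by omega⟩ else 0

/-- Componentwise truncation `t̄ ↦ t̄*`. -/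
noncomputable def truncT (q : ℕ) (t : Fin q → ℕ) : Fin q → Fin (q + 1) :=
  fun i => truncF q (t i)

/-- `G(t̄) = ∑_{k=0}^{q−1} ρ_{t_0+⋯+t_k}` for a tuple of (finite) inter-arrival times. -/
noncomputable def Gnat (q : ℕ) (ρ : ℕ → ℝ) (t : Fin q → ℕ) : ℝ :=
  ∑ k : Fin q, ρ (∑ j ∈ Finset.Iic k, t j)

/-- Last coordinate `t_{q−1}`. -/
noncomputable def lastN {q : ℕ} (t : Fin q → ℕ) : ℕ :=
  if h : 0 < q then t ⟨q - 1, by omega⟩ else 0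

/-- The shift consistency condition for tuples in `(ℕ*)^q`. -/
def shiftOKN {q : ℕ} (s t : Fin q → ℕ) : Prop :=
  ∀ i : Fin q, 1 ≤ i.1 → s i = t ⟨i.1 - 1, lt_of_le_of_lt (Nat.sub_le _ _) i.isLt⟩

/-- The countable-state kernel
`Q_β(s̄,t̄) = e^{β²G(t̄)} (K(t_{q−1})/(1−K(∞))) ∏_{i=1}^{q−1} 1_{s_i=t_{i−1}}` on `(ℕ*)^q`. -/
noncomputable def Qker (q : ℕ) (β : ℝ) (K ρ : ℕ → ℝ) (Kinf : ℝ)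
    (s t : Fin q → ℕ) : ℝ :=
  Real.exp (β ^ 2 * Gnat q ρ t) * (K (lastN t) / (1 - Kinf)) *
    (if shiftOKN s t then 1 else 0)

/-- The invariant probability of the finite Doob-transformed chain `Q̃*_β` lifts to an
invariant probability `μ(t̄) = μ*(t̄*) ∏_j K(t_j)/K(t*_j)` of the countable-state kernel
`Q̃_β(s̄,t̄) = Q_β(s̄,t̄)ν(t̄)/(λ(β)ν(s̄))`. -/
theorem invariant_measure_lift
    (q : ℕ) (hq : 1 ≤ q) (K : ℕ → ℝ) (hK0 : K 0 = 0)
    (hKpos : ∀ n, 1 ≤ n → 0 < K n) (hKsum : Summable K)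
    (Kinf : ℝ) (hKinf : Kinf = 1 - ∑' n : ℕ, K (n + 1))
    (hKinf0 : 0 ≤ Kinf) (hKinf1 : Kinf < 1)
    (ρ : ℕ → ℝ) (hρ : ∀ k, q < k → ρ k = 0) (β : ℝ)
    (lam : ℝ) (hlam : 0 < lam) (νs : (Fin q → Fin (q + 1)) → ℝ)
    (hνpos : ∀ u, 0 < νs u)
    (heig : Qmat q β K ρ Kinf *ᵥ νs = lam • νs)
    (μs : (Fin q → Fin (q + 1)) → ℝ) (hμs0 : ∀ u, 0 ≤ μs u)
    (hμs1 : ∑ u : Fin q → Fin (q + 1), μs u = 1)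
    (hμsinv : ∀ v : Fin q → Fin (q + 1),
      ∑ u : Fin q → Fin (q + 1),
        μs u * (Qmat q β K ρ Kinf u v * νs v / (lam * νs u)) = μs v)
    (μ : (Fin q → ℕ) → ℝ)
    (hμ : ∀ t : Fin q → ℕ,
      μ t = μs (truncT q t) * ∏ j : Fin q, K (t j) / Kstar q K (truncF q (t j))) :
    (∀ t : Fin q → ℕ, (∀ i, 1 ≤ t i) → 0 ≤ μ t) ∧
    (∑' t : (Fin q → ℕ), (if ∀ i, 1 ≤ t i then μ t else 0)) = 1 ∧
    (∀ t : Fin q → ℕ, (∀ i, 1 ≤ t i) →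
      (∑' s : (Fin q → ℕ),
        (if ∀ i, 1 ≤ s i then
          μ s * (Qker q β K ρ Kinf s t * νs (truncT q t) / (lam * νs (truncT q s)))
         else 0)) = μ t) := by

  obtain ⟨q', rfl⟩ : ∃ q'', q = q'' + 1 := ⟨q - 1, by omega⟩
  have hKnn : ∀ n, 0 ≤ K n := by
    intro n
    rcases Nat.eq_zero_or_pos n with h | h
    · simp [h, hK0]
    · exact (hKpos n h).le
  have h1K : (0 : ℝ) < 1 - Kinf := by linarith
  have hsumTail : Summable (fun n : ℕ => K (n + (q' + 1) + 1)) := by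
    have hinj : Function.Injective (fun n : ℕ => n + (q' + 1) + 1) := fun a b hab => by
      simpa using hab
    exact Summable.comp_injective hKsum hinj
  have hKstar_pos : ∀ e : Fin (q' + 1 + 1), 0 < Kstar (q' + 1) K e := by
    intro e
    by_cases he : e.1 = 0
    · rw [Kstar, if_pos he]
      exact Summable.tsum_pos hsumTail (fun n => hKnn _) 0 (hKpos _ (by omega))
    · rw [Kstar, if_neg he]
      exact hKpos _ (by omega)
  set g : Fin (q' + 1 + 1) → ℕ → ℝ := fun e n =>
    if 1 ≤ n ∧ truncF (q' + 1) n = e then K n / Kstar (q' + 1) K e else 0 with hg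
  have htrunc_small : ∀ n (h1 : 1 ≤ n) (h2 : n ≤ q' + 1),
      truncF (q' + 1) n = ⟨n, by omega⟩ := by
    intro n h1 h2
    rw [truncF, dif_pos ⟨h1, h2⟩]
  have htrunc_big : ∀ n, q' + 1 < n → truncF (q' + 1) n = 0 := by
    intro n h
    rw [truncF, dif_neg (by omega)]
  have hg0 : ∀ e n, 0 ≤ g e n := by
    intro e n
    rw [hg]
    dsimp only
    split
    · exact div_nonneg (hKnn n) (hKstar_pos e).le
    · exact le_refl 0
  have hgsum : ∀ e, HasSum (g e) 1 := by
    intro e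
    by_cases he : e.1 = 0
    · have he0 : e = 0 := Fin.ext he
      subst he0
      have hKs : Kstar (q' + 1) K 0 = ∑' n : ℕ, K (n + (q' + 1) + 1) := by
        rw [Kstar, if_pos (Fin.val_zero _)]
      have h1 : HasSum (fun n : ℕ => K (n + (q' + 1) + 1) / Kstar (q' + 1) K 0) 1 := by
        have h2 := hsumTail.hasSum.div_const (Kstar (q' + 1) K 0)
        rwa [← hKs, div_self (hKstar_pos 0).ne'] at h2
      have hfg : g 0 = fun n => if q' + 1 + 1 ≤ n then K n / Kstar (q' + 1) K 0 else 0 := by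
        funext n
        rw [hg]
        dsimp only
        by_cases hn : q' + 1 + 1 ≤ n
        · rw [if_pos hn, if_pos ⟨by omega, htrunc_big n (by omega)⟩]
        · rw [if_neg hn, if_neg]
          rintro ⟨hx1, hx2⟩
          rw [htrunc_small n hx1 (by omega)] at hx2
          have := congrArg Fin.val hx2
          simp at this
          omega
      rw [hfg]
      have hinj : Function.Injective (fun n : ℕ => n + (q' + 1) + 1) := fun a b hab => by
        simpa using hab
      refine (Function.Injective.hasSum_iff hinj ?_).mp ?_
      · intro n hn
        rw [if_neg]
        intro hc
        exact hn ⟨n - (q' + 1) - 1, by simp; omega⟩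
      · have hco : ((fun n => if q' + 1 + 1 ≤ n then K n / Kstar (q' + 1) K 0 else 0) ∘
            (fun n : ℕ => n + (q' + 1) + 1))
            = fun n : ℕ => K (n + (q' + 1) + 1) / Kstar (q' + 1) K 0 := by
          funext n
          simp only [Function.comp_apply]
          rw [if_pos (by omega)]
        rw [hco]
        exact h1
    · have hKs : Kstar (q' + 1) K e = K e.1 := by rw [Kstar, if_neg he]
      have hfg : g e = fun n => if n = e.1 then (1 : ℝ) else 0 := by
        funext n
        rw [hg]
        dsimp only
        by_cases hn : n = e.1
        · subst hn
          have hx1 : 1 ≤ e.1 := by omega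
          have hx2 : e.1 ≤ q' + 1 := by have := e.isLt; omega
          have hte : truncF (q' + 1) e.1 = e := by
            rw [htrunc_small _ hx1 hx2]
          rw [if_pos rfl, if_pos ⟨hx1, hte⟩, hKs, div_self (hKpos _ hx1).ne']
        · rw [if_neg hn, if_neg]
          rintro ⟨hx1, hx2⟩
          by_cases hle : n ≤ q' + 1
          · rw [htrunc_small n hx1 hle] at hx2
            have := congrArg Fin.val hx2
            simp at this
            omega
          · rw [htrunc_big n (by omega)] at hx2
            rw [← hx2] at he
            simp at he
      rw [hfg]
      simpa using hasSum_ite_eq e.1 (1 : ℝ)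
  refine ⟨?_, ?_, ?_⟩
  · intro t ht
    rw [hμ]
    exact mul_nonneg (hμs0 _)
      (Finset.prod_nonneg fun j _ => div_nonneg (hKnn _) (hKstar_pos _).le)
  · have key : ∀ t : Fin (q' + 1) → ℕ, (if ∀ i, 1 ≤ t i then μ t else 0)
        = ∑ u : Fin (q' + 1) → Fin (q' + 1 + 1), μs u * ∏ j, g (u j) (t j) := by
      intro t
      by_cases ht : ∀ i, 1 ≤ t i
      · rw [if_pos ht, hμ, Finset.sum_eq_single (truncT (q' + 1) t)]
        · congr 1
          refine Finset.prod_congr rfl fun j _ => ?_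
          rw [hg]
          dsimp only
          rw [if_pos ⟨ht j, rfl⟩]
          rfl
        · intro u _ hu
          obtain ⟨j, hj⟩ : ∃ j, u j ≠ truncF (q' + 1) (t j) := by
            by_contra hcon
            push_neg at hcon
            exact hu (funext hcon)
          rw [Finset.prod_eq_zero (Finset.mem_univ j), mul_zero]
          rw [hg]
          dsimp only
          rw [if_neg]
          rintro ⟨-, h2⟩
          exact hj h2.symm
        · intro h
          exact absurd (Finset.mem_univ _) h
      · rw [if_neg ht]
        push_neg at ht
        obtain ⟨i, hi⟩ := ht
        refine (Finset.sum_eq_zero fun u _ => ?_).symm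
        rw [Finset.prod_eq_zero (Finset.mem_univ i), mul_zero]
        rw [hg]
        dsimp only
        rw [if_neg]
        rintro ⟨h1, -⟩
        omega
    have hprod : ∀ u : Fin (q' + 1) → Fin (q' + 1 + 1),
        HasSum (fun t : Fin (q' + 1) → ℕ => ∏ j, g (u j) (t j)) 1 := by
      intro u
      have h := hasSum_pi_nat (q' + 1) (fun j => g (u j)) (fun _ => 1)
        (fun j n => hg0 _ _) (fun j => hgsum _)
      simpa using h
    calc ∑' t : Fin (q' + 1) → ℕ, (if ∀ i, 1 ≤ t i then μ t else 0)
        = ∑' t : Fin (q' + 1) → ℕ,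
            ∑ u : Fin (q' + 1) → Fin (q' + 1 + 1), μs u * ∏ j, g (u j) (t j) :=
          tsum_congr key
      _ = ∑ u : Fin (q' + 1) → Fin (q' + 1 + 1),
            ∑' t : Fin (q' + 1) → ℕ, μs u * ∏ j, g (u j) (t j) :=
          Summable.tsum_finsetSum fun u _ => ((hprod u).mul_left (μs u)).summable
      _ = 1 := by
          rw [Finset.sum_congr rfl fun u _ => ((hprod u).mul_left (μs u)).tsum_eq]
          simpa using hμs1
  · intro t ht
    set tt := truncT (q' + 1) t with htt
    set tl : Fin q' → ℕ := fun j => t j.castSucc with htl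
    set emb : ℕ → (Fin (q' + 1) → ℕ) := fun m => Fin.cons m tl with hemb
    set embE : Fin (q' + 1 + 1) → (Fin (q' + 1) → Fin (q' + 1 + 1)) :=
      fun e => Fin.cons e (fun j => truncF (q' + 1) (tl j)) with hembE
    set c : Fin (q' + 1 + 1) → ℝ := fun e =>
      μs (embE e) * (Qmat (q' + 1) β K ρ Kinf (embE e) tt * νs tt / (lam * νs (embE e)))
      with hc
    set P : ℝ := ∏ j : Fin (q' + 1), K (t j) / Kstar (q' + 1) K (truncF (q' + 1) (t j))
      with hP
    -- basic index facts
    have hlastN : lastN t = t (Fin.last q') := by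
      rw [lastN, dif_pos (by omega : 0 < q' + 1)]
      rfl
    have hlastE : lastE tt = truncF (q' + 1) (t (Fin.last q')) := by
      rw [lastE, dif_pos (by omega : 0 < q' + 1)]
      rfl
    have hG : Gfun (q' + 1) ρ tt = Gnat (q' + 1) ρ t := by
      rw [Gfun, Gnat]
      refine Finset.sum_congr rfl fun k _ => ?_
      by_cases hcs : ∀ j, j ≤ k → t j ≤ q' + 1
      · rw [if_pos]
        · congr 1
          refine Finset.sum_congr rfl fun j hj => ?_
          have hj' := Finset.mem_Iic.mp hj
          show ((tt j : Fin (q' + 1 + 1)) : ℕ) = t j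
          rw [htt]
          show ((truncF (q' + 1) (t j) : Fin (q' + 1 + 1)) : ℕ) = t j
          rw [htrunc_small _ (ht j) (hcs j hj')]
        · intro j hj
          show ((tt j : Fin (q' + 1 + 1)) : ℕ) ≠ 0
          rw [htt]
          show ((truncF (q' + 1) (t j) : Fin (q' + 1 + 1)) : ℕ) ≠ 0
          rw [htrunc_small _ (ht j) (hcs j hj)]
          show t j ≠ 0
          have := ht j
          omega
      · push_neg at hcs
        obtain ⟨j0, hj0le, hj0⟩ := hcs
        rw [if_neg, hρ]
        · calc q' + 1 < t j0 := hj0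
            _ ≤ ∑ j ∈ Finset.Iic k, t j :=
              Finset.single_le_sum (fun i _ => Nat.zero_le _) (Finset.mem_Iic.mpr hj0le)
        · intro hcon
          have h0 := hcon j0 hj0le
          rw [htt] at h0
          refine h0 ?_
          show ((truncF (q' + 1) (t j0) : Fin (q' + 1 + 1)) : ℕ) = 0
          rw [htrunc_big _ hj0]
          rfl
    -- shift facts
    have hcons_tail : ∀ (x : ℕ) (i : Fin (q' + 1)) (hi : 1 ≤ i.1)
        (hpf : i.1 - 1 < q' + 1), (Fin.cons x tl : Fin (q' + 1) → ℕ) i = t ⟨i.1 - 1, hpf⟩ := by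
      intro x i hi hpf
      obtain ⟨j, rfl⟩ : ∃ j : Fin q', i = Fin.succ j :=
        ⟨⟨i.1 - 1, by omega⟩, Fin.ext (by simp; omega)⟩
      rfl
    have hconsE_tail : ∀ (x : Fin (q' + 1 + 1)) (i : Fin (q' + 1)) (hi : 1 ≤ i.1)
        (hpf : i.1 - 1 < q' + 1),
        (Fin.cons x (fun j => truncF (q' + 1) (tl j)) :
          Fin (q' + 1) → Fin (q' + 1 + 1)) i = tt ⟨i.1 - 1, hpf⟩ := by
      intro x i hi hpf
      obtain ⟨j, rfl⟩ : ∃ j : Fin q', i = Fin.succ j :=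
        ⟨⟨i.1 - 1, by omega⟩, Fin.ext (by simp; omega)⟩
      rfl
    have hshift : ∀ m, shiftOKN (emb m) t := by
      intro m i hi
      rw [hemb]
      exact hcons_tail m i hi _
    have hshiftE : ∀ e, shiftOK (embE e) tt := by
      intro e i hi
      rw [hembE]
      exact hconsE_tail e i hi _
    -- reindex the tsum along emb
    have hinj : Function.Injective emb := by
      intro a b hab
      have h := congrArg (fun s => s 0) hab
      simpa [hemb] using h
    have hsupp : Function.support (fun s : Fin (q' + 1) → ℕ =>
        if ∀ i, 1 ≤ s i then
          μ s * (Qker (q' + 1) β K ρ Kinf s t * νs tt / (lam * νs (truncT (q' + 1) s)))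
        else 0) ⊆ Set.range emb := by
      intro s hs
      by_contra hr
      apply hs
      dsimp only
      by_cases hok : shiftOKN s t
      · exfalso
        apply hr
        refine ⟨s 0, ?_⟩
        funext i
        by_cases hi : 1 ≤ i.1
        · rw [hemb]
          dsimp only
          rw [hcons_tail (s 0) i hi (by omega)]
          exact (hok i hi).symm
        · have hi0 : i = 0 := Fin.ext (by simp only [Fin.val_zero]; omega)
          subst hi0
          simp [hemb]
      · split
        · rw [Qker, if_neg hok]
          ring
        · rfl
    rw [← Function.Injective.tsum_eq hinj hsupp]
    -- pointwise formula for the reindexed summand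
    have hFm : ∀ m : ℕ,
        (if ∀ i, 1 ≤ emb m i then
          μ (emb m) * (Qker (q' + 1) β K ρ Kinf (emb m) t * νs tt /
            (lam * νs (truncT (q' + 1) (emb m))))
        else 0) = ∑ e : Fin (q' + 1 + 1), g e m * c e * P := by
      intro m
      by_cases hm : 1 ≤ m
      · have hall : ∀ i, 1 ≤ emb m i := by
          intro i
          by_cases hi : 1 ≤ i.1
          · rw [hemb]
            dsimp only
            rw [hcons_tail m i hi (by omega)]
            exact ht _
          · have hi0 : i = 0 := Fin.ext (by simp only [Fin.val_zero]; omega)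
            subst hi0
            simpa [hemb] using hm
        have htremb : truncT (q' + 1) (emb m) = embE (truncF (q' + 1) m) := by
          funext i
          refine Fin.cases ?_ (fun j => ?_) i
          · simp [truncT, hemb, hembE]
          · simp [truncT, hemb, hembE, Fin.cons_succ]
        have hμemb : μ (emb m) = μs (embE (truncF (q' + 1) m)) *
            ((K m / Kstar (q' + 1) K (truncF (q' + 1) m)) *
              ∏ j : Fin q', K (tl j) / Kstar (q' + 1) K (truncF (q' + 1) (tl j))) := by
          rw [hμ, htremb]
          congr 1
          rw [Fin.prod_univ_succ]
          simp [hemb, Fin.cons_succ, Fin.cons_zero]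
        have hQ : Qker (q' + 1) β K ρ Kinf (emb m) t
            = Qmat (q' + 1) β K ρ Kinf (embE (truncF (q' + 1) m)) tt
              * (K (t (Fin.last q')) /
                  Kstar (q' + 1) K (truncF (q' + 1) (t (Fin.last q')))) := by
          rw [Qker, Qmat, if_pos (hshift m), if_pos (hshiftE _), hG, hlastE, hlastN]
          have hb := (hKstar_pos (truncF (q' + 1) (t (Fin.last q')))).ne'
          field_simp
        have hPsplit : P = (∏ j : Fin q', K (tl j) /
              Kstar (q' + 1) K (truncF (q' + 1) (tl j)))
            * (K (t (Fin.last q')) /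
                Kstar (q' + 1) K (truncF (q' + 1) (t (Fin.last q')))) := by
          rw [hP, Fin.prod_univ_castSucc]
        rw [if_pos hall, Finset.sum_eq_single (truncF (q' + 1) m)]
        · rw [hμemb, htremb, hQ, hPsplit]
          rw [hg]
          dsimp only
          rw [if_pos ⟨hm, rfl⟩, hc]
          ring
        · intro e _ he
          rw [hg]
          dsimp only
          rw [if_neg, zero_mul, zero_mul]
          rintro ⟨-, h2⟩
          exact he h2.symm
        · intro h
          exact absurd (Finset.mem_univ _) h
      · rw [if_neg]
        · refine (Finset.sum_eq_zero fun e _ => ?_).symm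
          rw [hg]
          dsimp only
          rw [if_neg, zero_mul, zero_mul]
          rintro ⟨h1, -⟩
          omega
        · intro hall
          have h0 := hall 0
          rw [hemb] at h0
          simp at h0
          omega
    -- sum over the fibers
    have hsummand : ∀ e : Fin (q' + 1 + 1),
        HasSum (fun m => g e m * (c e * P)) (c e * P) := by
      intro e
      simpa using (hgsum e).mul_right (c e * P)
    have hsum_c : ∑ e : Fin (q' + 1 + 1), c e = μs tt := by
      have hinv := hμsinv tt
      rw [← hinv]
      have hinjE : Function.Injective embE := by
        intro a b hab
        have h := congrArg (fun s => s 0) hab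
        simpa [hembE] using h
      have h1 : ∑ u ∈ Finset.image embE Finset.univ,
            μs u * (Qmat (q' + 1) β K ρ Kinf u tt * νs tt / (lam * νs u))
          = ∑ u : Fin (q' + 1) → Fin (q' + 1 + 1),
            μs u * (Qmat (q' + 1) β K ρ Kinf u tt * νs tt / (lam * νs u)) := by
        refine Finset.sum_subset (Finset.subset_univ _) ?_
        intro u _ hu
        have hnok : ¬ shiftOK u tt := by
          intro hok
          apply hu
          refine Finset.mem_image.mpr ⟨u 0, Finset.mem_univ _, ?_⟩
          funext i
          by_cases hi : 1 ≤ i.1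
          · rw [hembE]
            dsimp only
            rw [hconsE_tail (u 0) i hi (by omega)]
            exact (hok i hi).symm
          · have hi0 : i = 0 := Fin.ext (by simp only [Fin.val_zero]; omega)
            subst hi0
            simp [hembE]
        rw [Qmat, if_neg hnok]
        ring
      rw [← h1, Finset.sum_image (fun x _ y _ h => hinjE h)]
    calc ∑' m, (if ∀ i, 1 ≤ emb m i then
          μ (emb m) * (Qker (q' + 1) β K ρ Kinf (emb m) t * νs tt /
            (lam * νs (truncT (q' + 1) (emb m))))
        else 0)
        = ∑' m, ∑ e : Fin (q' + 1 + 1), g e m * (c e * P) := by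
          refine tsum_congr fun m => ?_
          rw [hFm m]
          exact Finset.sum_congr rfl fun e _ => by ring
      _ = ∑ e : Fin (q' + 1 + 1), ∑' m, g e m * (c e * P) :=
          Summable.tsum_finsetSum fun e _ => (hsummand e).summable
      _ = ∑ e : Fin (q' + 1 + 1), c e * P :=
          Finset.sum_congr rfl fun e _ => (hsummand e).tsum_eq
      _ = (∑ e : Fin (q' + 1 + 1), c e) * P := by rw [Finset.sum_mul]
      _ = μs tt * P := by rw [hsum_c]
      _ = μ t := by rw [hμ, htt, hP]
end

section
/- Let P be a primitive stochastic matrix on a finite set S, and Com(P−Id) the cofactor matrix of P − Id. Then Tr(Com(P−Id)) ≠ 0, and for every s ∈ S, Tr(ᵗCom(P−Id)·P^{(s)}) / Tr(ᵗCom(P−Id)) = π(s), where P^{(s)}(i,j) = P(i,j)·1_{j=s} and π is the unique invariant probability measure of P. -/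
open Matrix Finset

section Aux

variable {S : Type*} [Fintype S] [DecidableEq S] [Nonempty S]

/-- Powers of an entrywise-stochastic matrix are stochastic. -/
lemma aux_pow_stoch (P : Matrix S S ℝ) (hstoch : ∀ i, ∑ j, P i j = 1) (k : ℕ) :
    ∀ i, ∑ j, (P ^ k) i j = 1 := by
  induction k with
  | zero => intro i; simp [Matrix.one_apply]
  | succ k ih =>
      intro i
      rw [pow_succ]
      simp only [Matrix.mul_apply]
      rw [Finset.sum_comm]
      calc ∑ m, ∑ j, (P ^ k) i m * P m j
          = ∑ m, (P ^ k) i m * ∑ j, P m j := by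
            refine Finset.sum_congr rfl fun m _ => ?_
            rw [Finset.mul_sum]
        _ = 1 := by simp only [hstoch, mul_one]; exact ih i

/-- Left-invariant vectors are invariant under powers. -/
lemma aux_pow_left (P : Matrix S S ℝ) (v : S → ℝ)
    (hv : ∀ j, ∑ i, v i * P i j = v j) (k : ℕ) :
    ∀ j, ∑ i, v i * (P ^ k) i j = v j := by
  induction k with
  | zero => intro j; simp [Matrix.one_apply, Finset.sum_ite_eq, Finset.mem_univ]
  | succ k ih =>
      intro j
      rw [pow_succ]
      simp only [Matrix.mul_apply]
      calc ∑ i, v i * ∑ m, (P ^ k) i m * P m j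
          = ∑ m, (∑ i, v i * (P ^ k) i m) * P m j := by
            simp_rw [Finset.mul_sum, Finset.sum_mul]
            rw [Finset.sum_comm]
            simp_rw [mul_assoc]
        _ = v j := by simp_rw [ih]; exact hv j

/-- Right-invariant vectors are invariant under powers. -/
lemma aux_pow_right (P : Matrix S S ℝ) (v : S → ℝ)
    (hv : ∀ i, ∑ j, P i j * v j = v i) (k : ℕ) :
    ∀ i, ∑ j, (P ^ k) i j * v j = v i := by
  induction k with
  | zero => intro i; simp [Matrix.one_apply, Finset.sum_ite_eq, Finset.mem_univ]
  | succ k ih =>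
      intro i
      rw [pow_succ]
      simp only [Matrix.mul_apply]
      calc ∑ j, (∑ m, (P ^ k) i m * P m j) * v j
          = ∑ m, (P ^ k) i m * ∑ j, P m j * v j := by
            simp_rw [Finset.sum_mul, Finset.mul_sum]
            rw [Finset.sum_comm]
            simp_rw [mul_assoc]
        _ = v i := by simp_rw [hv]; exact ih i

/-- A right eigenvector (eigenvalue 1) of a positive stochastic matrix is constant. -/
lemma aux_right_const (Q : Matrix S S ℝ) (hpos : ∀ i j, 0 < Q i j)
    (hstoch : ∀ i, ∑ j, Q i j = 1) (v : S → ℝ)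
    (hv : ∀ i, ∑ j, Q i j * v j = v i) (i j : S) : v i = v j := by
  obtain ⟨m, -, hm⟩ := Finset.exists_max_image Finset.univ v ⟨Classical.arbitrary S, mem_univ _⟩
  suffices h : ∀ a, v a = v m by rw [h i, h j]
  intro a
  have hle : ∀ b ∈ Finset.univ, Q m b * v b ≤ Q m b * v m := fun b _ =>
    mul_le_mul_of_nonneg_left (hm b (mem_univ b)) (hpos m b).le
  have hsum : ∑ b, Q m b * v b = ∑ b, Q m b * v m := by
    rw [hv m, ← Finset.sum_mul, hstoch m, one_mul]
  have key := (Finset.sum_eq_sum_iff_of_le hle).mp hsum a (mem_univ a)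
  exact mul_left_cancel₀ (ne_of_gt (hpos m a)) key

/-- A left eigenvector (eigenvalue 1) of a positive stochastic matrix with zero sum
is zero. -/
lemma aux_left_zero (Q : Matrix S S ℝ) (hpos : ∀ i j, 0 < Q i j)
    (hstoch : ∀ i, ∑ j, Q i j = 1) (v : S → ℝ)
    (hv : ∀ j, ∑ i, v i * Q i j = v j) (hsum : ∑ i, v i = 0) : ∀ i, v i = 0 := by
  set w : S → ℝ := fun i => max (v i) 0 with hw
  have hw0 : ∀ i, 0 ≤ w i := fun i => le_max_right _ _
  have hwv : ∀ i, v i ≤ w i := fun i => le_max_left _ _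
  -- w j ≤ ∑ i, w i * Q i j
  have hle : ∀ j, w j ≤ ∑ i, w i * Q i j := by
    intro j
    refine max_le ?_ ?_
    · rw [← hv j]
      exact Finset.sum_le_sum fun i _ =>
        mul_le_mul_of_nonneg_right (hwv i) (hpos i j).le
    · exact Finset.sum_nonneg fun i _ => mul_nonneg (hw0 i) (hpos i j).le
  have htot : ∑ j, w j = ∑ j, ∑ i, w i * Q i j := by
    rw [Finset.sum_comm]
    refine (Finset.sum_congr rfl fun i _ => ?_).symm
    rw [← Finset.mul_sum, hstoch i, mul_one]
  have heq : ∀ j, w j = ∑ i, w i * Q i j := fun j =>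
    (Finset.sum_eq_sum_iff_of_le (fun j _ => hle j)).mp htot j (mem_univ j)
  -- Suppose some v i ≠ 0; then there are strictly positive and negative entries.
  by_contra hne
  push_neg at hne
  obtain ⟨i0, hi0⟩ := hne
  have hexneg : ∃ i, v i < 0 := by
    by_contra hnn
    push_neg at hnn
    have := (Finset.sum_eq_zero_iff_of_nonneg (fun i _ => hnn i)).mp hsum
    exact hi0 (this i0 (mem_univ i0))
  have hexpos : ∃ i, 0 < v i := by
    by_contra hnp
    push_neg at hnp
    have hsum' : ∑ i, -v i = 0 := by simp [Finset.sum_neg_distrib, hsum]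
    have := (Finset.sum_eq_zero_iff_of_nonneg
      (fun i _ => neg_nonneg.mpr (hnp i))).mp hsum'
    exact hi0 (neg_eq_zero.mp (this i0 (mem_univ i0)))
  obtain ⟨p, hp⟩ := hexpos
  obtain ⟨q, hq⟩ := hexneg
  have hwq : w q = 0 := max_eq_right hq.le
  have : 0 < ∑ i, w i * Q i q := by
    refine lt_of_lt_of_le ?_ (Finset.single_le_sum
      (fun i _ => mul_nonneg (hw0 i) (hpos i q).le) (mem_univ p))
    exact mul_pos (lt_max_iff.mpr (Or.inl hp)) (hpos p q)
  rw [← heq q, hwq] at this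
  exact lt_irrefl 0 this

end Aux

/-- Cofactor formula for the invariant probability of a primitive stochastic matrix:
`Tr(ᵗCom(P−Id)) ≠ 0` and `Tr(ᵗCom(P−Id)·P^{(s)})/Tr(ᵗCom(P−Id)) = π(s)`, where
`P^{(s)}(i,j) = P(i,j)·1_{j=s}` and `π` is the unique invariant probability of `P`.
(Recall that in Mathlib `adjugate A = ᵗCom(A)`.) -/
theorem cofactor_invariant_measure
    {S : Type*} [Fintype S] [DecidableEq S] [Nonempty S]
    (P : Matrix S S ℝ) (hnonneg : ∀ i j, 0 ≤ P i j)
    (hstoch : ∀ i, ∑ j, P i j = 1)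
    (hprim : ∃ k : ℕ, 0 < k ∧ ∀ i j, 0 < (P ^ k) i j)
    (π : S → ℝ) (hπ0 : ∀ s, 0 ≤ π s) (hπ1 : ∑ s, π s = 1)
    (hπinv : ∀ j, ∑ i, π i * P i j = π j) :
    Matrix.trace (Matrix.adjugate (P - 1)) ≠ 0 ∧
    ∀ s : S,
      Matrix.trace (Matrix.adjugate (P - 1) *
          Matrix.of (fun i j => P i j * (if j = s then 1 else 0))) /
        Matrix.trace (Matrix.adjugate (P - 1)) = π s := by
  obtain ⟨k, -, hkpos⟩ := hprim
  have hQstoch : ∀ i, ∑ j, (P ^ k) i j = 1 := aux_pow_stoch P hstoch k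
  set A := Matrix.adjugate (P - 1) with hA
  -- determinant of P - 1 is zero
  have hdet : (P - 1).det = 0 := by
    refine Matrix.exists_mulVec_eq_zero_iff.mp ⟨fun _ => 1, ?_, ?_⟩
    · intro h
      have := congrFun h (Classical.arbitrary S)
      simp at this
    · funext i
      simp only [Matrix.mulVec, dotProduct, Matrix.sub_apply, mul_one, Pi.zero_apply]
      rw [Finset.sum_sub_distrib, hstoch i]
      simp [Matrix.one_apply]
  have hAP : A * (P - 1) = 0 := by rw [hA, Matrix.adjugate_mul, hdet, zero_smul]
  have hPA : (P - 1) * A = 0 := by rw [hA, Matrix.mul_adjugate, hdet, zero_smul]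
  -- rows of A are left-invariant
  have hrow : ∀ i j, ∑ m, A i m * P m j = A i j := by
    intro i j
    have := congrFun (congrFun hAP i) j
    simp only [Matrix.mul_apply, Matrix.sub_apply, Matrix.zero_apply, mul_sub,
      Finset.sum_sub_distrib, sub_eq_zero] at this
    rw [this]
    simp [Matrix.one_apply, Finset.sum_ite_eq, Finset.mem_univ]
  -- columns of A are right-invariant
  have hcol : ∀ i j, ∑ m, P i m * A m j = A i j := by
    intro i j
    have := congrFun (congrFun hPA i) j
    simp only [Matrix.mul_apply, Matrix.sub_apply, Matrix.zero_apply, sub_mul,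
      Finset.sum_sub_distrib, sub_eq_zero] at this
    rw [this]
    simp [Matrix.one_apply, Finset.sum_ite_eq, Finset.mem_univ]
  -- columns of A are constant
  have hcolconst : ∀ j i i', A i j = A i' j := by
    intro j i i'
    exact aux_right_const (P ^ k) hkpos hQstoch (fun m => A m j)
      (aux_pow_right P (fun m => A m j) (fun m => hcol m j) k) i i'
  -- each row of A equals (its sum) • π
  have hrowpi : ∀ i j, A i j = (∑ m, A i m) * π j := by
    intro i j
    set c := ∑ m, A i m with hc
    set v : S → ℝ := fun n => A i n - c * π n with hvdef
    have hv : ∀ m, ∑ n, v n * P n m = v m := by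
      intro m
      simp only [hvdef, sub_mul, Finset.sum_sub_distrib, hrow i m]
      congr 1
      simp_rw [mul_assoc, ← Finset.mul_sum, hπinv m]
    have hvsum : ∑ n, v n = 0 := by
      simp only [hvdef, Finset.sum_sub_distrib, ← Finset.mul_sum, hπ1, mul_one, ← hc,
        sub_self]
    have := aux_left_zero (P ^ k) hkpos hQstoch v (aux_pow_left P v hv k) hvsum j
    simp only [hvdef, sub_eq_zero] at this
    exact this
  -- pick s₀ with π s₀ > 0
  have hs0 : ∃ s₀, 0 < π s₀ := by
    by_contra h
    push_neg at h
    have : ∀ s ∈ Finset.univ, π s = 0 := fun s _ => le_antisymm (h s) (hπ0 s)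
    rw [Finset.sum_congr rfl this] at hπ1
    simp at hπ1
  obtain ⟨s₀, hs₀⟩ := hs0
  -- the (s₀, s₀) cofactor is nonzero
  have hAs0 : A s₀ s₀ ≠ 0 := by
    rw [hA, Matrix.adjugate_apply]
    set B := (P - 1).updateRow s₀ (Pi.single s₀ 1) with hB
    intro hdB
    obtain ⟨v, hvne, hvB⟩ := Matrix.exists_mulVec_eq_zero_iff.mpr hdB
    have hvs0 : v s₀ = 0 := by
      have := congrFun hvB s₀
      simp only [hB, Matrix.mulVec, dotProduct, Matrix.updateRow_self, Pi.zero_apply] at this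
      rwa [Finset.sum_eq_single s₀ (fun b _ hb => by simp [Pi.single_eq_of_ne hb])
        (fun h => absurd (mem_univ s₀) h), Pi.single_eq_same, one_mul] at this
    set u : S → ℝ := fun i => ∑ j, (P - 1) i j * v j with hu
    have huoff : ∀ i, i ≠ s₀ → u i = 0 := by
      intro i hi
      have := congrFun hvB i
      simp only [hB, Matrix.mulVec, dotProduct, Matrix.updateRow_ne hi, Pi.zero_apply] at this
      exact this
    have hpiu : ∑ i, π i * u i = 0 := by
      simp only [hu, Finset.mul_sum]
      rw [Finset.sum_comm]
      refine Finset.sum_eq_zero fun j _ => ?_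
      have : ∑ i, π i * ((P - 1) i j * v j) = (∑ i, π i * (P - 1) i j) * v j := by
        rw [Finset.sum_mul]; simp_rw [mul_assoc]
      rw [this]
      have : ∑ i, π i * (P - 1) i j = 0 := by
        simp only [Matrix.sub_apply, mul_sub, Finset.sum_sub_distrib, hπinv j, sub_eq_zero]
        simp [Matrix.one_apply, Finset.sum_ite_eq, Finset.mem_univ]
      rw [this, zero_mul]
    have hus0 : u s₀ = 0 := by
      rw [Finset.sum_eq_single s₀ (fun b _ hb => by rw [huoff b hb, mul_zero])
        (fun h => absurd (mem_univ s₀) h)] at hpiu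
      exact (mul_eq_zero.mp hpiu).resolve_left (ne_of_gt hs₀)
    have huz : ∀ i, u i = 0 := by
      intro i
      by_cases hi : i = s₀
      · rw [hi]; exact hus0
      · exact huoff i hi
    -- (P - 1) v = 0, so v is right-invariant, hence constant, hence zero
    have hvinv : ∀ i, ∑ j, P i j * v j = v i := by
      intro i
      have := huz i
      simp only [hu, Matrix.sub_apply, sub_mul, Finset.sum_sub_distrib, sub_eq_zero] at this
      rw [this]
      simp [Matrix.one_apply, Finset.sum_ite_eq, Finset.mem_univ]
    have hconst : ∀ i, v i = v s₀ :=
      fun i => aux_right_const (P ^ k) hkpos hQstoch v (aux_pow_right P v hvinv k) i s₀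
    exact hvne (funext fun i => by rw [hconst i, hvs0]; rfl)
  -- the row sums c_i are all equal
  set c := ∑ m, A s₀ m with hcdef
  have hAcpi : ∀ i j, A i j = c * π j := by
    intro i j
    rw [hrowpi i j]
    congr 1
    have h1 : A i s₀ = (∑ m, A i m) * π s₀ := hrowpi i s₀
    have h2 : A s₀ s₀ = c * π s₀ := hrowpi s₀ s₀
    have h3 : A i s₀ = A s₀ s₀ := hcolconst s₀ i s₀
    rw [h1, h2] at h3
    exact mul_right_cancel₀ (ne_of_gt hs₀) h3
  have hc0 : c ≠ 0 := by
    intro h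
    apply hAs0
    rw [hAcpi s₀ s₀, h, zero_mul]
  have htr : Matrix.trace A = c := by
    rw [Matrix.trace]
    simp only [Matrix.diag]
    calc ∑ i, A i i = ∑ i, c * π i := Finset.sum_congr rfl fun i _ => hAcpi i i
      _ = c := by rw [← Finset.mul_sum, hπ1, mul_one]
  refine ⟨by rw [htr]; exact hc0, fun s => ?_⟩
  have htrs : Matrix.trace (A * Matrix.of fun i j => P i j * (if j = s then 1 else 0))
      = c * π s := by
    rw [Matrix.trace]
    simp only [Matrix.diag, Matrix.mul_apply, Matrix.of_apply]
    have : ∀ i, ∑ j, A i j * (P j i * (if i = s then 1 else 0))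
        = if i = s then ∑ j, A i j * P j i else 0 := by
      intro i
      by_cases hi : i = s
      · simp [hi]
      · simp [hi]
    simp_rw [this]
    rw [Finset.sum_ite_eq' Finset.univ s (fun i => ∑ j, A i j * P j i)]
    simp only [Finset.mem_univ, if_true]
    rw [hrow s s, hAcpi s s]
  rw [htrs, htr, mul_comm c (π s), mul_div_assoc, div_self hc0, mul_one]
end

section
/- Let F ↦ Q̃*_{β,F} be defined by Q̃*_{β,F}(s̄*,t̄*) = e^{ε − F φ_F(t*_{q−1})} Q̃*_β(s̄*,t̄*), where ε > 0 is fixed, φ_F(s*) = s* for s* ∈ {1,…,q}, and φ_F(⋆) is defined by e^{−F φ_F(⋆)} K(⋆) = ∑_{t>q} e^{−Ft} K(t). Let λ_F be its Perron–Frobenius eigenvalue. Then F ↦ λ_F is continuous and strictly decreasing on (0,∞), λ_F → 0 as F → ∞, λ_0 = e^ε > 1, and hence there is a unique F̃(ε) > 0 with λ_{F̃(ε)} = 1. -/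
open scoped Classical
open Filter Matrix

lemma eig_le_aux {n : Type*} [Fintype n] [Nonempty n]
    {A B : Matrix n n ℝ} {v w : n → ℝ} {lA lB : ℝ}
    (hA0 : ∀ s t, 0 ≤ A s t) (hBA : ∀ s t, B s t ≤ A s t)
    (hv : ∀ u, 0 < v u) (hw : ∀ u, 0 < w u)
    (hAv : A *ᵥ v = lA • v) (hBw : B *ᵥ w = lB • w) : lB ≤ lA := by
  obtain ⟨j, hj⟩ := Finite.exists_max (fun u => w u / v u)
  have hr : ∀ t, w t ≤ (w j / v j) * v t := by
    intro t
    rw [div_mul_eq_mul_div, le_div_iff₀ (hv j)]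
    have := hj t
    rw [div_le_div_iff₀ (hv t) (hv j)] at this
    linarith
  have h1 : ∑ t, B j t * w t ≤ ∑ t, A j t * w t :=
    Finset.sum_le_sum fun t _ => mul_le_mul_of_nonneg_right (hBA j t) (hw t).le
  have h2 : ∑ t, A j t * w t ≤ (w j / v j) * ∑ t, A j t * v t := by
    rw [Finset.mul_sum]
    refine Finset.sum_le_sum fun t _ => ?_
    calc A j t * w t ≤ A j t * ((w j / v j) * v t) :=
          mul_le_mul_of_nonneg_left (hr t) (hA0 j t)
      _ = w j / v j * (A j t * v t) := by ring
  have hBwj : (B *ᵥ w) j = ∑ t, B j t * w t := rfl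
  have hAvj : (A *ᵥ v) j = ∑ t, A j t * v t := rfl
  have e1 : lB * w j = ∑ t, B j t * w t := by
    rw [← hBwj, hBw]; simp [mul_comm]
  have e2 : ∑ t, A j t * v t = lA * v j := by
    rw [← hAvj, hAv]; simp [mul_comm]
  have : lB * w j ≤ lA * w j := by
    have hc : w j / v j * (lA * v j) = lA * w j := by
      rw [div_mul_eq_mul_div, mul_comm (w j), mul_assoc, mul_div_assoc,
        mul_comm (v j), mul_div_assoc, div_self (hv j).ne', mul_one]
    calc lB * w j ≤ (w j / v j) * ∑ t, A j t * v t := by linarith [h1, h2, e1.le]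
      _ = lA * w j := by rw [e2, hc]
  exact le_of_mul_le_mul_right this (hw j)

lemma eig_lt_aux {n : Type*} [Fintype n] [Nonempty n]
    {A B : Matrix n n ℝ} {v w : n → ℝ} {lA lB : ℝ}
    (hA0 : ∀ s t, 0 ≤ A s t) (hBA : ∀ s t, B s t ≤ A s t)
    (hrow : ∀ j, ∃ t, B j t < A j t)
    (hv : ∀ u, 0 < v u) (hw : ∀ u, 0 < w u)
    (hAv : A *ᵥ v = lA • v) (hBw : B *ᵥ w = lB • w) : lB < lA := by
  obtain ⟨j, hj⟩ := Finite.exists_max (fun u => w u / v u)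
  have hr : ∀ t, w t ≤ (w j / v j) * v t := by
    intro t
    rw [div_mul_eq_mul_div, le_div_iff₀ (hv j)]
    have := hj t
    rw [div_le_div_iff₀ (hv t) (hv j)] at this
    linarith
  obtain ⟨t₀, ht₀⟩ := hrow j
  have h1 : ∑ t, B j t * w t < ∑ t, A j t * w t := by
    refine Finset.sum_lt_sum (fun t _ => mul_le_mul_of_nonneg_right (hBA j t) (hw t).le)
      ⟨t₀, Finset.mem_univ _, mul_lt_mul_of_pos_right ht₀ (hw t₀)⟩
  have h2 : ∑ t, A j t * w t ≤ (w j / v j) * ∑ t, A j t * v t := by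
    rw [Finset.mul_sum]
    refine Finset.sum_le_sum fun t _ => ?_
    calc A j t * w t ≤ A j t * ((w j / v j) * v t) :=
          mul_le_mul_of_nonneg_left (hr t) (hA0 j t)
      _ = w j / v j * (A j t * v t) := by ring
  have e1 : lB * w j = ∑ t, B j t * w t := by
    rw [show (∑ t, B j t * w t) = (B *ᵥ w) j from rfl, hBw]; simp [mul_comm]
  have e2 : ∑ t, A j t * v t = lA * v j := by
    rw [show (∑ t, A j t * v t) = (A *ᵥ v) j from rfl, hAv]; simp [mul_comm]
  have : lB * w j < lA * w j := by
    have hc : w j / v j * (lA * v j) = lA * w j := by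
      rw [div_mul_eq_mul_div, mul_comm (w j), mul_assoc, mul_div_assoc,
        mul_comm (v j), mul_div_assoc, div_self (hv j).ne', mul_one]
    calc lB * w j < (w j / v j) * ∑ t, A j t * v t := by linarith [h1, h2, e1.le]
      _ = lA * w j := by rw [e2, hc]
  exact lt_of_mul_lt_mul_right this (hw j).le


/-- The tilted Doob-transformed transfer matrix `Q̃*_{β,F}`, with entries
`e^{ε − F φ_F(t*_{q−1})} Q̃*_β(s̄*,t̄*)`, where `φ_F(s*) = s*` for `s* ∈ {1,…,q}` and
`φF : ℝ → ℝ` gives the value `φ_F(⋆)`. -/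
noncomputable def QtiltF (q : ℕ) (β ε : ℝ) (K ρ : ℕ → ℝ)
    (lam : ℝ) (νs : (Fin q → Fin (q + 1)) → ℝ) (φF : ℝ → ℝ) (F : ℝ) :
    Matrix (Fin q → Fin (q + 1)) (Fin q → Fin (q + 1)) ℝ := fun s t =>
  Real.exp (ε - F * (if (lastE t).1 = 0 then φF F else ((lastE t).1 : ℝ))) *
    (Qmat q β K ρ 0 s t * νs t / (lam * νs s))

/-- Existence and uniqueness of `F̃(ε) > 0` with `λ_{F̃(ε)} = 1`: the Perron–Frobenius
eigenvalue `λ_F` of `Q̃*_{β,F}` is continuous and strictly decreasing on `(0,∞)`,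
tends to `0` as `F → ∞`, and `λ_0 = e^ε > 1`. -/
theorem tilted_pf_eigenvalue_crosses_one
    (q : ℕ) (hq : 1 ≤ q) (K : ℕ → ℝ) (hK0 : K 0 = 0)
    (hKpos : ∀ n, 1 ≤ n → 0 < K n) (hKsum : Summable K)
    (hrec : ∑' n : ℕ, K (n + 1) = 1)  -- recurrence: K(∞) = 0
    (ρ : ℕ → ℝ) (hρ : ∀ k, q < k → ρ k = 0) (β : ℝ)
    (lam : ℝ) (hlampos : 0 < lam) (νs : (Fin q → Fin (q + 1)) → ℝ)
    (hνpos : ∀ u, 0 < νs u)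
    (heig : Qmat q β K ρ 0 *ᵥ νs = lam • νs)
    (ε : ℝ) (hε : 0 < ε)
    (φF : ℝ → ℝ)  -- φ_F(⋆), defined by e^{−F φ_F(⋆)} K(⋆) = ∑_{t>q} e^{−Ft} K(t)
    (hφ : ∀ F : ℝ, 0 ≤ F →
      Real.exp (-F * φF F) * (∑' n : ℕ, K (n + q + 1)) =
        ∑' n : ℕ, Real.exp (-F * ((n : ℝ) + q + 1)) * K (n + q + 1))
    (lamF : ℝ → ℝ)
    (hlamF : ∀ F : ℝ, 0 ≤ F → ∃ v : (Fin q → Fin (q + 1)) → ℝ,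
      (∀ u, 0 < v u) ∧ QtiltF q β ε K ρ lam νs φF F *ᵥ v = lamF F • v) :
    ContinuousOn lamF (Set.Ioi 0) ∧
    StrictAntiOn lamF (Set.Ioi 0) ∧
    Tendsto lamF atTop (nhds 0) ∧
    lamF 0 = Real.exp ε ∧
    (∃! F : ℝ, 0 < F ∧ lamF F = 1) := by
  classical
  -- ## Setup: series facts
  set S : ℝ := ∑' n : ℕ, K (n + q + 1) with hSdef
  have SK : Summable (fun n : ℕ => K (n + q + 1)) := by
    have := (summable_nat_add_iff (f := K) (q + 1)).mpr hKsum
    simpa [add_assoc] using this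
  have hKt : ∀ n : ℕ, 0 < K (n + q + 1) := fun n => hKpos _ (by omega)
  have hSpos : 0 < S := Summable.tsum_pos SK (fun n => (hKt n).le) 0 (hKt 0)
  set hfun : ℝ → ℝ :=
    fun F => ∑' n : ℕ, Real.exp (-F * ((n : ℝ) + q + 1)) * K (n + q + 1) with hhdef
  have hterm_pos : ∀ (F : ℝ) (n : ℕ), 0 < Real.exp (-F * ((n:ℝ) + q + 1)) * K (n + q + 1) :=
    fun F n => mul_pos (Real.exp_pos _) (hKt n)
  have hx1 : ∀ n : ℕ, (1:ℝ) ≤ (n:ℝ) + q + 1 := by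
    intro n
    have h1 : (0:ℝ) ≤ (n:ℝ) := Nat.cast_nonneg n
    have h2 : (0:ℝ) ≤ (q:ℝ) := Nat.cast_nonneg q
    linarith
  have hsumm : ∀ F : ℝ, 0 ≤ F →
      Summable (fun n : ℕ => Real.exp (-F * ((n:ℝ)+q+1)) * K (n+q+1)) := by
    intro F hF
    refine Summable.of_nonneg_of_le (fun n => (hterm_pos F n).le) (fun n => ?_) SK
    have he : Real.exp (-F * ((n:ℝ)+q+1)) ≤ 1 := by
      rw [Real.exp_le_one_iff]
      nlinarith [hx1 n]
    nlinarith [(hKt n).le]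
  have hfun_pos : ∀ F : ℝ, 0 ≤ F → 0 < hfun F := fun F hF =>
    Summable.tsum_pos (hsumm F hF) (fun n => (hterm_pos F n).le) 0 (hterm_pos F 0)
  -- ## ψ F = F * φF F
  set ψ : ℝ → ℝ := fun F => F * φF F with hψdef
  have hψ_exp : ∀ F : ℝ, 0 ≤ F → Real.exp (-ψ F) * S = hfun F := by
    intro F hF
    have h := hφ F hF
    rw [neg_mul] at h
    exact h
  have hfun_lt : ∀ F1 F2 : ℝ, 0 ≤ F1 → F1 < F2 → hfun F2 < hfun F1 := by
    intro F1 F2 h1 hlt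
    refine Summable.tsum_lt_tsum (i := 0) (fun n => ?_) ?_ (hsumm F2 (by linarith)) (hsumm F1 h1)
    · refine mul_le_mul_of_nonneg_right (Real.exp_le_exp.mpr ?_) (hKt n).le
      nlinarith [hx1 n]
    · refine mul_lt_mul_of_pos_right (Real.exp_lt_exp.mpr ?_) (hKt 0)
      nlinarith [hx1 0]
  have hψ_mono : ∀ F1 F2 : ℝ, 0 ≤ F1 → F1 < F2 → ψ F1 < ψ F2 := by
    intro F1 F2 h1 hlt
    have e1 := hψ_exp F1 h1
    have e2 := hψ_exp F2 (by linarith)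
    have hml : Real.exp (-ψ F2) * S < Real.exp (-ψ F1) * S := by
      rw [e1, e2]; exact hfun_lt F1 F2 h1 hlt
    have := Real.exp_lt_exp.mp (lt_of_mul_lt_mul_right hml hSpos.le)
    linarith
  have hψ_ge : ∀ F : ℝ, 0 ≤ F → F ≤ ψ F := by
    intro F hF
    have hle : hfun F ≤ Real.exp (-F) * S := by
      rw [hSdef, ← tsum_mul_left]
      refine Summable.tsum_le_tsum (fun n => ?_) (hsumm F hF) (SK.mul_left _)
      refine mul_le_mul_of_nonneg_right (Real.exp_le_exp.mpr ?_) (hKt n).le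
      nlinarith [hx1 n]
    have hml : Real.exp (-ψ F) * S ≤ Real.exp (-F) * S := by rw [hψ_exp F hF]; exact hle
    have := Real.exp_le_exp.mp (le_of_mul_le_mul_right hml hSpos)
    linarith
  have hψ_cont : ContinuousOn ψ (Set.Ici 0) := by
    have htil_cont : Continuous (fun F : ℝ => hfun (max F 0)) := by
      rw [hhdef]
      refine continuous_tsum (fun n => ?_) SK (fun n F => ?_)
      · exact (Real.continuous_exp.comp
          (((continuous_id.max continuous_const).neg).mul continuous_const)).mul continuous_const
      · rw [Real.norm_eq_abs, abs_of_nonneg (hterm_pos _ n).le]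
        have hm : (0:ℝ) ≤ max F 0 := le_max_right _ _
        have he : Real.exp (-(max F 0) * ((n:ℝ)+q+1)) ≤ 1 := by
          rw [Real.exp_le_one_iff]
          nlinarith [hx1 n]
        nlinarith [(hKt n).le]
    have hG : Continuous fun F : ℝ => Real.log S - Real.log (hfun (max F 0)) :=
      continuous_const.sub (htil_cont.log (fun F => (hfun_pos _ (le_max_right _ _)).ne'))
    refine hG.continuousOn.congr ?_
    intro F hF
    have hF0 : (0:ℝ) ≤ F := hF
    have hmax : max F 0 = F := max_eq_left hF0
    have e := hψ_exp F hF0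
    have hlog : -ψ F = Real.log (hfun F) - Real.log S := by
      have := congrArg Real.log e
      rw [Real.log_mul (Real.exp_pos _).ne' hSpos.ne', Real.log_exp] at this
      linarith
    simp only [hmax]
    linarith
  -- ## entries of the tilted matrix
  set g : ℝ → (Fin q → Fin (q+1)) → ℝ :=
    fun F t => F * (if (lastE t).1 = 0 then φF F else ((lastE t).1 : ℝ)) with hgdef
  set D : (Fin q → Fin (q+1)) → (Fin q → Fin (q+1)) → ℝ :=
    fun s t => Qmat q β K ρ 0 s t * νs t / (lam * νs s) with hDdef
  have hKstar_nn : ∀ e : Fin (q+1), 0 ≤ Kstar q K e := by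
    intro e
    unfold Kstar
    split
    · exact tsum_nonneg fun n => (hKt n).le
    · next h => exact (hKpos _ (Nat.one_le_iff_ne_zero.mpr h)).le
  have Qnn : ∀ s t, 0 ≤ Qmat q β K ρ 0 s t := by
    intro s t
    unfold Qmat
    refine mul_nonneg (mul_nonneg (Real.exp_pos _).le ?_) ?_
    · exact div_nonneg (hKstar_nn _) (by norm_num)
    · split <;> norm_num
  have hD_nn : ∀ s t, 0 ≤ D s t := fun s t =>
    div_nonneg (mul_nonneg (Qnn s t) (hνpos t).le) (mul_nonneg hlampos.le (hνpos s).le)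
  have entry_eq : ∀ (F : ℝ) s t,
      QtiltF q β ε K ρ lam νs φF F s t = Real.exp (ε - g F t) * D s t := fun F s t => rfl
  have Qt_nn : ∀ (F : ℝ) s t, 0 ≤ QtiltF q β ε K ρ lam νs φF F s t := by
    intro F s t
    rw [entry_eq]
    exact mul_nonneg (Real.exp_pos _).le (hD_nn s t)
  -- row positivity
  have rowpos : ∀ s : Fin q → Fin (q+1), ∃ t, 0 < Qmat q β K ρ 0 s t := by
    intro s
    refine ⟨fun i => if h : i.1 + 1 < q then s ⟨i.1+1, h⟩ else ⟨1, by omega⟩, ?_⟩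
    have hshift : shiftOK s (fun i => if h : i.1 + 1 < q then s ⟨i.1+1, h⟩ else ⟨1, by omega⟩) := by
      intro i hi
      have hlt : i.1 - 1 + 1 < q := by omega
      simp only [hlt, dif_pos]
      congr 1
      exact Fin.ext (by simp; omega)
    have hlast : lastE (fun i => if h : i.1 + 1 < q then s ⟨i.1+1, h⟩ else ⟨1, by omega⟩)
        = ⟨1, by omega⟩ := by
      unfold lastE
      rw [dif_pos (by omega : 0 < q)]
      have hnot : ¬ ((⟨q - 1, by omega⟩ : Fin q).1 + 1 < q) := by simp; omega
      simp only [dif_neg hnot]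
    unfold Qmat
    rw [if_pos hshift, hlast]
    have hKs : Kstar q K ⟨1, by omega⟩ = K 1 := by
      unfold Kstar
      norm_num
    rw [hKs]
    have := hKpos 1 le_rfl
    positivity
  -- ## eigenvalue comparison "claim"
  have claim : ∀ F F₀ : ℝ, 0 ≤ F → 0 ≤ F₀ → ∀ δ : ℝ,
      (∀ t, g F₀ t - g F t ≤ δ) → lamF F ≤ Real.exp δ * lamF F₀ := by
    intro F F₀ hF hF₀ δ hδ
    obtain ⟨v, hv, hveq⟩ := hlamF F hF
    obtain ⟨v₀, hv₀, hv₀eq⟩ := hlamF F₀ hF₀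
    have hAeq : (Real.exp δ • QtiltF q β ε K ρ lam νs φF F₀) *ᵥ v₀
        = (Real.exp δ * lamF F₀) • v₀ := by
      rw [Matrix.smul_mulVec, hv₀eq, smul_smul]
    refine eig_le_aux (fun s t => ?_) (fun s t => ?_) hv₀ hv hAeq hveq
    · simp only [Matrix.smul_apply, smul_eq_mul]
      exact mul_nonneg (Real.exp_pos _).le (Qt_nn F₀ s t)
    · simp only [Matrix.smul_apply, smul_eq_mul]
      rw [entry_eq, entry_eq]
      have hexp : Real.exp (ε - g F t) ≤ Real.exp δ * Real.exp (ε - g F₀ t) := by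
        rw [← Real.exp_add]
        exact Real.exp_le_exp.mpr (by have := hδ t; linarith)
      calc Real.exp (ε - g F t) * D s t
          ≤ (Real.exp δ * Real.exp (ε - g F₀ t)) * D s t :=
            mul_le_mul_of_nonneg_right hexp (hD_nn s t)
        _ = Real.exp δ * (Real.exp (ε - g F₀ t) * D s t) := by ring
  have sclaim : ∀ F F₀ : ℝ, 0 ≤ F → 0 ≤ F₀ →
      (∀ t, g F t < g F₀ t) → lamF F₀ < lamF F := by
    intro F F₀ hF hF₀ hlt
    obtain ⟨v, hv, hveq⟩ := hlamF F hF
    obtain ⟨v₀, hv₀, hv₀eq⟩ := hlamF F₀ hF₀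
    refine eig_lt_aux (Qt_nn F) (fun s t => ?_) (fun j => ?_) hv hv₀ hveq hv₀eq
    · rw [entry_eq, entry_eq]
      exact mul_le_mul_of_nonneg_right (Real.exp_le_exp.mpr (by have := hlt t; linarith))
        (hD_nn s t)
    · obtain ⟨t, ht⟩ := rowpos j
      have hDpos : 0 < D j t :=
        div_pos (mul_pos ht (hνpos t)) (mul_pos hlampos (hνpos j))
      refine ⟨t, ?_⟩
      rw [entry_eq, entry_eq]
      exact mul_lt_mul_of_pos_right (Real.exp_lt_exp.mpr (by have := hlt t; linarith)) hDpos
  -- ## λ_0 = e^ε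
  have hQ0eig : QtiltF q β ε K ρ lam νs φF 0 *ᵥ (fun _ => (1:ℝ))
      = Real.exp ε • (fun _ => (1:ℝ)) := by
    funext s
    have hsum : ∑ t, Qmat q β K ρ 0 s t * νs t = lam * νs s := by
      have := congrFun heig s
      simpa [Matrix.mulVec, dotProduct, Pi.smul_apply, smul_eq_mul] using this
    show ∑ t, QtiltF q β ε K ρ lam νs φF 0 s t * 1 = Real.exp ε * 1
    simp only [QtiltF, zero_mul, sub_zero, mul_one]
    rw [← Finset.mul_sum, ← Finset.sum_div, hsum,
      div_self (mul_pos hlampos (hνpos s)).ne', mul_one]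
  have hlamF0 : lamF 0 = Real.exp ε := by
    obtain ⟨v, hv, hveq⟩ := hlamF 0 le_rfl
    have h1 : lamF 0 ≤ Real.exp ε :=
      eig_le_aux (Qt_nn 0) (fun s t => le_rfl) (fun _ => one_pos) hv hQ0eig hveq
    have h2 : Real.exp ε ≤ lamF 0 :=
      eig_le_aux (Qt_nn 0) (fun s t => le_rfl) hv (fun _ => one_pos) hveq hQ0eig
    exact le_antisymm h1 h2
  -- ## nonnegativity of λ_F
  have hlam_nn : ∀ F : ℝ, 0 ≤ F → 0 ≤ lamF F := by
    intro F hF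
    obtain ⟨v, hv, hveq⟩ := hlamF F hF
    have u : Fin q → Fin (q+1) := fun _ => 0
    have heq := congrFun hveq u
    have hL : 0 ≤ (QtiltF q β ε K ρ lam νs φF F *ᵥ v) u :=
      Finset.sum_nonneg fun t _ => mul_nonneg (Qt_nn F u t) (hv t).le
    rw [heq] at hL
    simp only [Pi.smul_apply, smul_eq_mul] at hL
    nlinarith [hv u]
  -- ## upper bound and tendsto 0
  have hglb : ∀ F : ℝ, 0 ≤ F → ∀ t, F ≤ g F t := by
    intro F hF t
    simp only [hgdef]
    by_cases hstar : (lastE t).1 = 0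
    · rw [if_pos hstar]
      exact hψ_ge F hF
    · rw [if_neg hstar]
      have hc : (1:ℝ) ≤ ((lastE t).1 : ℝ) := by
        exact_mod_cast Nat.one_le_iff_ne_zero.mpr hstar
      nlinarith
  have hg0 : ∀ t, g 0 t = 0 := by intro t; simp [hgdef]
  have hub : ∀ F : ℝ, 0 ≤ F → lamF F ≤ Real.exp (-F) * lamF 0 := by
    intro F hF
    refine claim F 0 hF le_rfl (-F) ?_
    intro t
    rw [hg0 t]
    have := hglb F hF t
    linarith
  have htend : Tendsto lamF atTop (nhds 0) := by
    have hup : Tendsto (fun F => Real.exp (-F) * lamF 0) atTop (nhds 0) := by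
      have h1 : Tendsto (fun F : ℝ => Real.exp (-F)) atTop (nhds 0) :=
        Real.tendsto_exp_neg_atTop_nhds_zero
      simpa using h1.mul_const (lamF 0)
    refine tendsto_of_tendsto_of_tendsto_of_le_of_le' tendsto_const_nhds hup ?_ ?_
    · exact (eventually_ge_atTop 0).mono fun F hF => hlam_nn F hF
    · exact (eventually_ge_atTop 0).mono fun F hF => hub F hF
  -- ## continuity on Ici 0
  have hcontIci : ∀ F₀ ∈ Set.Ici (0:ℝ), ContinuousWithinAt lamF (Set.Ici 0) F₀ := by
    intro F₀ hF₀
    set δ : ℝ → ℝ := fun F => max (|ψ F - ψ F₀|) ((q:ℝ) * |F - F₀|) with hδdef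
    have hδt : Tendsto δ (nhdsWithin F₀ (Set.Ici 0)) (nhds 0) := by
      have h1 : Tendsto (fun F => |ψ F - ψ F₀|) (nhdsWithin F₀ (Set.Ici 0)) (nhds 0) := by
        have hc := hψ_cont F₀ hF₀
        have := (hc.sub_const (ψ F₀)).abs
        simpa using this
      have h2 : Tendsto (fun F : ℝ => (q:ℝ) * |F - F₀|) (nhdsWithin F₀ (Set.Ici 0)) (nhds 0) := by
        have hc : Continuous fun F : ℝ => (q:ℝ) * |F - F₀| :=
          continuous_const.mul ((continuous_id.sub continuous_const).abs)
        have := (hc.tendsto F₀).mono_left (nhdsWithin_le_nhds (s := Set.Ici 0))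
        simpa using this
      have := h1.max h2
      simpa using this
    have habs : ∀ F : ℝ, ∀ t, |g F t - g F₀ t| ≤ δ F := by
      intro F t
      simp only [hgdef, hδdef]
      by_cases hstar : (lastE t).1 = 0
      · rw [if_pos hstar, if_pos hstar]
        exact le_max_left _ _
      · rw [if_neg hstar, if_neg hstar]
        have hc0 : (0:ℝ) ≤ ((lastE t).1 : ℝ) := Nat.cast_nonneg _
        have hcq : ((lastE t).1 : ℝ) ≤ (q:ℝ) := by
          exact_mod_cast Nat.lt_succ_iff.mp (lastE t).isLt
        have : |F * ((lastE t).1 : ℝ) - F₀ * ((lastE t).1 : ℝ)|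
            = ((lastE t).1 : ℝ) * |F - F₀| := by
          rw [← sub_mul, abs_mul, mul_comm, abs_of_nonneg hc0]
        rw [this]
        refine le_max_of_le_right ?_
        exact mul_le_mul_of_nonneg_right hcq (abs_nonneg _)
    have hbound_up : ∀ F ∈ Set.Ici (0:ℝ), lamF F ≤ Real.exp (δ F) * lamF F₀ := by
      intro F hF
      refine claim F F₀ hF hF₀ (δ F) fun t => ?_
      have := abs_le.mp (habs F t)
      linarith [this.1]
    have hbound_lo : ∀ F ∈ Set.Ici (0:ℝ), Real.exp (-(δ F)) * lamF F₀ ≤ lamF F := by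
      intro F hF
      have h := claim F₀ F hF₀ hF (δ F) fun t => by
        have := abs_le.mp (habs F t)
        linarith [this.2]
      rw [Real.exp_neg, inv_mul_le_iff₀ (Real.exp_pos _)]
      exact h
    have hlow : Tendsto (fun F => Real.exp (-(δ F)) * lamF F₀)
        (nhdsWithin F₀ (Set.Ici 0)) (nhds (lamF F₀)) := by
      have hn : Tendsto (fun F => -δ F) (nhdsWithin F₀ (Set.Ici 0)) (nhds 0) := by
        simpa using hδt.neg
      have := ((Real.continuous_exp.tendsto 0).comp hn).mul_const (lamF F₀)
      simpa using this
    have hup : Tendsto (fun F => Real.exp (δ F) * lamF F₀)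
        (nhdsWithin F₀ (Set.Ici 0)) (nhds (lamF F₀)) := by
      have := ((Real.continuous_exp.tendsto 0).comp hδt).mul_const (lamF F₀)
      simpa using this
    refine tendsto_of_tendsto_of_tendsto_of_le_of_le' hlow hup ?_ ?_
    · exact eventually_mem_nhdsWithin.mono fun F hF => hbound_lo F hF
    · exact eventually_mem_nhdsWithin.mono fun F hF => hbound_up F hF
  -- ## strict antitonicity
  have hantiIci : ∀ F1 ∈ Set.Ici (0:ℝ), ∀ F2, F1 < F2 → lamF F2 < lamF F1 := by
    intro F1 h1 F2 hlt
    refine sclaim F1 F2 h1 (by simp at h1 ⊢; linarith) fun t => ?_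
    simp only [hgdef]
    by_cases hstar : (lastE t).1 = 0
    · rw [if_pos hstar, if_pos hstar]
      exact hψ_mono F1 F2 h1 hlt
    · rw [if_neg hstar, if_neg hstar]
      have hc : (1:ℝ) ≤ ((lastE t).1 : ℝ) := by
        exact_mod_cast Nat.one_le_iff_ne_zero.mpr hstar
      exact mul_lt_mul_of_pos_right hlt (by linarith)
  have hanti : StrictAntiOn lamF (Set.Ioi 0) := by
    intro F1 h1 F2 h2 hlt
    exact hantiIci F1 (Set.mem_Ici.mpr (le_of_lt h1)) F2 hlt
  have hcont : ContinuousOn lamF (Set.Ioi 0) := fun F hF =>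
    (hcontIci F (Set.mem_Ici.mpr (le_of_lt hF))).mono Set.Ioi_subset_Ici_self
  refine ⟨hcont, hanti, htend, hlamF0, ?_⟩
  -- ## existence and uniqueness of the crossing
  have hone : (1:ℝ) < Real.exp ε := by
    rw [← Real.exp_zero]
    exact Real.exp_lt_exp.mpr hε
  have h0t : Tendsto lamF (nhdsWithin 0 (Set.Ioi 0)) (nhds (Real.exp ε)) := by
    have := hcontIci 0 Set.self_mem_Ici
    rw [ContinuousWithinAt, hlamF0] at this
    exact this.mono_left (nhdsWithin_mono 0 Set.Ioi_subset_Ici_self)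
  have hev : ∀ᶠ F in nhdsWithin 0 (Set.Ioi 0), 1 < lamF F :=
    h0t.eventually (eventually_gt_nhds hone)
  obtain ⟨a, ha1, ha0⟩ := (hev.and eventually_mem_nhdsWithin).exists
  have hblt : ∀ᶠ F in atTop, lamF F < 1 := htend.eventually (eventually_lt_nhds one_pos)
  obtain ⟨b, hb1, hab⟩ := (hblt.and (eventually_ge_atTop (a+1))).exists
  have ha0' : (0:ℝ) < a := ha0
  have haltb : a ≤ b := by linarith
  have hseg : Set.Icc a b ⊆ Set.Ici (0:ℝ) := fun x hx => le_trans ha0'.le hx.1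
  have hcOn : ContinuousOn lamF (Set.Icc a b) := fun x hx =>
    (hcontIci x (hseg hx)).mono hseg
  obtain ⟨F₀, hF₀mem, hF₀⟩ := intermediate_value_Icc' haltb hcOn ⟨hb1.le, ha1.le⟩
  have hF₀pos : 0 < F₀ := lt_of_lt_of_le ha0' hF₀mem.1
  refine ⟨F₀, ⟨hF₀pos, hF₀⟩, ?_⟩
  rintro F' ⟨hF'pos, hF'1⟩
  exact hanti.injOn (Set.mem_Ioi.mpr hF'pos) (Set.mem_Ioi.mpr hF₀pos) (by rw [hF'1, hF₀])
end
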